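/- arXiv:0901.3348 — 5 statements merged into one kernel-verified Lean document; each statement's English description precedes it below -/
import Mathlib

section
/- Fix p ∈ (0,1). There exist constants c₁ > 0 and c₂ ∈ (0,1), depending only on p, such that for all positive integers n and N the following holds. Let A be an n×N random matrix with entries independent and identically distributed according to Ω. For each column j, let n_j denote the number of entries of column j of A equal to 1. Define the matrix Ã by: Ã_{ij} = 1 for every (i,j) with A_{ij} = 1, and Ã_{ij} = −n_j/(n − n_j) for every (i,j) with A_{ij} = −p/(1−p) (if n_j = n for some j, the event below is declared to fail, i.e., ‖A − Ã‖_F is taken to be +∞). Then P(‖A − Ã‖_F² ≤ c₁ N) ≥ 1 − (2/3)^N − N c₂^n. -/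
open MeasureTheory ProbabilityTheory Matrix

open scoped Classical in
/-- The number of entries equal to `1` in column `j` of `A`. -/
noncomputable def onesInColumn {n N : ℕ} (A : Matrix (Fin n) (Fin N) ℝ) (j : Fin N) : ℕ :=
  (Finset.univ.filter fun i => A i j = 1).card

open scoped Classical in
/-- The matrix `Ã` built from `A`: entries equal to `1` stay `1`; other entries of column `j`
are replaced by `−n_j/(n − n_j)` where `n_j` is the number of `1`s in column `j`. -/
noncomputable def tildeMatrix {n N : ℕ} (A : Matrix (Fin n) (Fin N) ℝ) :
    Matrix (Fin n) (Fin N) ℝ :=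
  Matrix.of fun i j =>
    if A i j = 1 then 1
    else -(onesInColumn A j : ℝ) / ((n : ℝ) - (onesInColumn A j : ℝ))

/-- The Frobenius norm of a real matrix. -/
noncomputable def frobeniusNorm {m n : Type*} [Fintype m] [Fintype n]
    (A : Matrix m n ℝ) : ℝ :=
  Real.sqrt (∑ i, ∑ j, (A i j) ^ 2)

/-- The two-point distribution Ω with parameter `p`: value `1` with probability `p` and
value `−p/(1−p)` with probability `1−p`. -/
noncomputable def omegaDist (p : ℝ) : Measure ℝ :=
  ENNReal.ofReal p • Measure.dirac (1 : ℝ)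
    + ENNReal.ofReal (1 - p) • Measure.dirac (-p / (1 - p))

/- ### Auxiliary lemmas -/

open scoped Classical

noncomputable def ind1 (x : ℝ) : ℝ := if x = 1 then 1 else 0

lemma ind1_measurable : Measurable ind1 := by
  unfold ind1
  exact Measurable.ite (measurableSet_eq) measurable_const measurable_const

lemma abs_ind1_sub_le {p : ℝ} (hp0 : 0 ≤ p) (hp1 : p ≤ 1) (x : ℝ) : |ind1 x - p| ≤ 1 := by
  unfold ind1
  split <;> rw [abs_le] <;> constructor <;> linarith

lemma exp_le_one_add_add_sq {x : ℝ} (h : |x| ≤ 1) : Real.exp x ≤ 1 + x + x ^ 2 := by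
  have := Real.exp_bound h (n := 2) (by norm_num)
  have h2 : |Real.exp x - (1 + x)| ≤ x ^ 2 * (3 / (2*2)) := by
    simpa [Finset.sum_range_succ] using this
  have := abs_le.1 h2
  nlinarith [sq_nonneg x]

lemma sum_geom_le {r : ℝ} (h0 : 0 ≤ r) (h1 : r < 1) (k : ℕ) :
    ∑ m ∈ Finset.range k, r ^ m ≤ (1 - r)⁻¹ := by
  rw [geom_sum_eq (by linarith)]
  have hr : (0:ℝ) < 1 - r := by linarith
  have heq : (r ^ k - 1) / (r - 1) = (1 - r ^ k) / (1 - r) := by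
    rw [div_eq_div_iff (by linarith : (r:ℝ) - 1 ≠ 0) hr.ne']; ring
  rw [heq, div_le_iff₀ hr, inv_mul_cancel₀ hr.ne']
  have : 0 ≤ r ^ k := pow_nonneg h0 k
  linarith

section IndepHelpers

variable {Ω : Type*} {mΩ : MeasurableSpace Ω} {μ : Measure Ω}

lemma iIndepFun_precomp {ι κ : Type*} {f : ι → Ω → ℝ} (g : κ → ι) (hg : Function.Injective g)
    (h : iIndepFun f μ) :
    iIndepFun (fun k => f (g k)) μ := by
  classical
  rw [iIndepFun_iff_measure_inter_preimage_eq_mul] at h ⊢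
  intro S sets hsets
  set E : ι → Set ℝ := Function.extend g sets (fun _ => Set.univ) with hE
  have hEg : ∀ k, E (g k) = sets k := fun k => hg.extend_apply _ _ k
  have key := h (S.map ⟨g, hg⟩) (sets := E) ?_
  · have h1 : (⋂ i ∈ S.map ⟨g, hg⟩, f i ⁻¹' E i) = ⋂ k ∈ S, f (g k) ⁻¹' sets k := by
      ext x
      simp only [Set.mem_iInter, Finset.mem_map, Function.Embedding.coeFn_mk]
      constructor
      · intro hx k hk
        have := hx (g k) ⟨k, hk, rfl⟩
        rwa [hEg] at this
      · rintro hx i ⟨k, hk, rfl⟩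
        rw [hEg]; exact hx k hk
    have h2 : (∏ i ∈ S.map ⟨g, hg⟩, μ (f i ⁻¹' E i)) = ∏ k ∈ S, μ (f (g k) ⁻¹' sets k) := by
      rw [Finset.prod_map]
      exact Finset.prod_congr rfl fun k _ => by rw [Function.Embedding.coeFn_mk, hEg]
    rw [h1, h2] at key
    exact key
  · intro i hi
    rw [Finset.mem_map] at hi
    obtain ⟨k, hk, rfl⟩ := hi
    show MeasurableSet (E (g k))
    rw [hEg]
    exact hsets k hk

lemma iIndepFun_columns {n N : ℕ} {X : Fin n × Fin N → Ω → ℝ}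
    (hX : ∀ e, Measurable (X e))
    (h : iIndepFun X μ) :
    iIndepFun
      (fun j ω => fun i => X (i, j) ω) μ := by
  classical
  set C : Fin N → Ω → (Fin n → ℝ) := fun j ω i => X (i, j) ω with hC
  have hCmeas : ∀ j, Measurable (C j) := fun j => measurable_pi_iff.mpr fun i => hX _
  rw [iIndepFun_iff_iIndep]
  set π : Fin N → Set (Set Ω) := fun j =>
    {s | ∃ t : Fin n → Set ℝ, (∀ i, MeasurableSet (t i)) ∧ s = ⋂ i, (X (i, j)) ⁻¹' (t i)}
    with hπ
  have hmul := (iIndepFun_iff_measure_inter_preimage_eq_mul.1 h)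
  have hcol : ∀ (S : Finset (Fin N)) (t : Fin N → Fin n → Set ℝ),
      (∀ j ∈ S, ∀ i, MeasurableSet (t j i)) →
      μ (⋂ j ∈ S, ⋂ i, X (i, j) ⁻¹' t j i) =
        ∏ j ∈ S, ∏ i, μ (X (i, j) ⁻¹' t j i) := by
    intro S t ht
    classical
    set T : Fin n × Fin N → Set ℝ := fun e => if e.2 ∈ S then t e.2 e.1 else Set.univ with hT
    have key := hmul (Finset.univ ×ˢ S) (sets := T) ?_
    · have h1 : (⋂ e ∈ Finset.univ ×ˢ S, X e ⁻¹' T e) = ⋂ j ∈ S, ⋂ i, X (i, j) ⁻¹' t j i := by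
        ext x
        simp only [Set.mem_iInter, Finset.mem_product, Finset.mem_univ, true_and, hT]
        constructor
        · intro hx j hj i
          have := hx (i, j) hj
          simpa [hj] using this
        · intro hx e he
          simp only [if_pos he]
          exact hx e.2 he e.1
      have h2 : (∏ e ∈ Finset.univ ×ˢ S, μ (X e ⁻¹' T e)) =
          ∏ j ∈ S, ∏ i, μ (X (i, j) ⁻¹' t j i) := by
        rw [Finset.prod_product_right]
        exact Finset.prod_congr rfl fun j hj => Finset.prod_congr rfl fun i _ => by
          simp [hT, hj]
      rw [h1, h2] at key
      exact key
    · intro e he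
      simp only [hT]
      split
      · rename_i hmem
        exact ht e.2 hmem e.1
      · exact MeasurableSet.univ
  refine iIndepSets.iIndep (fun j => (hCmeas j).comap_le) π (fun j => ?_) (fun j => ?_) ?_
  · rintro s ⟨t, ht, rfl⟩ s' ⟨t', ht', rfl⟩ -
    refine ⟨fun i => t i ∩ t' i, fun i => (ht i).inter (ht' i), ?_⟩
    ext x
    simp only [Set.mem_inter_iff, Set.mem_iInter, Set.mem_preimage]
    exact ⟨fun ⟨h1, h2⟩ i => ⟨h1 i, h2 i⟩, fun h => ⟨fun i => (h i).1, fun i => (h i).2⟩⟩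
  · rw [← generateFrom_pi, MeasurableSpace.comap_generateFrom]
    congr 1
    ext s
    simp only [Set.mem_image, Set.mem_setOf_eq, hπ]
    constructor
    · rintro ⟨u, ⟨t, ht, rfl⟩, rfl⟩
      refine ⟨t, fun i => ht i (Set.mem_univ i), ?_⟩
      ext x
      simp [Set.mem_pi, C]
    · rintro ⟨t, ht, rfl⟩
      refine ⟨Set.pi Set.univ t, ⟨t, fun i _ => ht i, rfl⟩, ?_⟩
      ext x
      simp [Set.mem_pi, C]
  · rw [iIndepSets_iff]
    intro S f hf
    classical
    have hchoice : ∀ j ∈ S, ∃ t : Fin n → Set ℝ,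
        (∀ i, MeasurableSet (t i)) ∧ f j = ⋂ i, X (i, j) ⁻¹' t i := fun j hj => hf j hj
    choose! t ht1 ht2 using hchoice
    have h1 : (⋂ j ∈ S, f j) = ⋂ j ∈ S, ⋂ i, X (i, j) ⁻¹' t j i := by
      apply Set.iInter₂_congr
      intro j hj
      exact ht2 j hj
    rw [h1, hcol S t ht1]
    refine Finset.prod_congr rfl fun j hj => ?_
    rw [ht2 j hj]
    have := hcol {j} t (fun j' hj' i => by
      rw [Finset.mem_singleton.1 hj']; exact ht1 j hj i)
    simpa using this.symm

end IndepHelpers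

lemma integral_omegaDist {p : ℝ} (hp0 : 0 ≤ p) (hp1 : p ≤ 1) (f : ℝ → ℝ) (hf : Measurable f) :
    ∫ x, f x ∂(omegaDist p) = p * f 1 + (1 - p) * f (-p / (1 - p)) := by
  have h1 : ∀ a : ℝ, Integrable f (Measure.dirac a) := by
    intro a
    refine ⟨hf.aestronglyMeasurable, ?_⟩
    rw [HasFiniteIntegral, lintegral_dirac]
    exact ENNReal.coe_lt_top
  rw [omegaDist, integral_add_measure ((h1 1).smul_measure ENNReal.ofReal_ne_top)
    ((h1 _).smul_measure ENNReal.ofReal_ne_top), integral_smul_measure, integral_smul_measure,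
    integral_dirac, integral_dirac, ENNReal.toReal_ofReal hp0,
    ENNReal.toReal_ofReal (by linarith)]
  simp [smul_eq_mul]

lemma omegaDist_compl {p : ℝ} : omegaDist p (({1, -p / (1 - p)} : Set ℝ))ᶜ = 0 := by
  have h1 : (1:ℝ) ∈ ({1, -p / (1 - p)} : Set ℝ) := by simp
  have h2 : (-p / (1 - p)) ∈ ({1, -p / (1 - p)} : Set ℝ) := by simp
  simp only [omegaDist, Measure.coe_add, Pi.add_apply, Measure.coe_smul, Pi.smul_apply,
    Measure.dirac_apply]
  rw [Set.indicator_of_notMem (by simpa using h1), Set.indicator_of_notMem (by simpa using h2)]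
  simp

lemma entry_mgf_bound {p t : ℝ} (hp0 : 0 < p) (hp1 : p < 1) (ht : |t| ≤ 1) :
    p * Real.exp (t * (1 - p)) + (1 - p) * Real.exp (t * (0 - p)) ≤ Real.exp (t ^ 2 / 4) := by
  have habs : |t| * |1 - p| ≤ 1 := by
    rw [abs_of_nonneg (by linarith : (0:ℝ) ≤ 1 - p)]
    calc |t| * (1 - p) ≤ 1 * 1 := by
          apply mul_le_mul ht (by linarith) (by linarith) zero_le_one
      _ = 1 := by ring
  have habs2 : |t| * |p| ≤ 1 := by
    rw [abs_of_nonneg hp0.le]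
    calc |t| * p ≤ 1 * 1 := mul_le_mul ht hp1.le hp0.le zero_le_one
      _ = 1 := by ring
  have e1 : Real.exp (t * (1 - p)) ≤ 1 + t * (1 - p) + (t * (1 - p)) ^ 2 :=
    exp_le_one_add_add_sq (by rwa [abs_mul])
  have e2 : Real.exp (t * (0 - p)) ≤ 1 + t * (0 - p) + (t * (0 - p)) ^ 2 := by
    apply exp_le_one_add_add_sq
    rw [abs_mul]
    simpa using habs2
  have key : p * (1 + t * (1 - p) + (t * (1 - p)) ^ 2)
      + (1 - p) * (1 + t * (0 - p) + (t * (0 - p)) ^ 2) = 1 + t ^ 2 * (p * (1 - p)) := by ring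
  have hple : p * (1 - p) ≤ 1 / 4 := by nlinarith [sq_nonneg (p - 1/2)]
  have hmain : p * Real.exp (t * (1 - p)) + (1 - p) * Real.exp (t * (0 - p))
      ≤ 1 + t ^ 2 * (p * (1 - p)) := by
    rw [← key]
    have := mul_le_mul_of_nonneg_left e1 hp0.le
    have := mul_le_mul_of_nonneg_left e2 (by linarith : (0:ℝ) ≤ 1 - p)
    linarith
  refine hmain.trans ?_
  have h4 : 1 + t ^ 2 * (p * (1 - p)) ≤ t ^ 2 / 4 + 1 := by nlinarith [sq_nonneg t]
  exact h4.trans (Real.add_one_le_exp _)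

set_option maxHeartbeats 1000000 in
/-- for `p ∈ (0,1)` there are `c₁ > 0` and `c₂ ∈ (0,1)` depending only on `p`
such that for all `n, N ≥ 1`, a random `n × N` matrix with i.i.d. Ω-distributed entries
satisfies `‖A − Ã‖_F² ≤ c₁ N` (in particular no column is all ones) with probability at
least `1 − (2/3)^N − N c₂^n`. -/
theorem frobenius_bound_A_tildeA
    (p : ℝ) (hp : p ∈ Set.Ioo (0 : ℝ) 1) :
    ∃ c₁ > (0 : ℝ), ∃ c₂ ∈ Set.Ioo (0 : ℝ) 1, ∀ n N : ℕ, 0 < n → 0 < N →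
      ∀ (Ω : Type) (mΩ : MeasurableSpace Ω) (μ : Measure Ω),
        IsProbabilityMeasure μ →
        ∀ A : Ω → Matrix (Fin n) (Fin N) ℝ,
          (∀ i j, Measurable fun ω => A ω i j) →
          iIndepFun
            (fun (e : Fin n × Fin N) ω => A ω e.1 e.2) μ →
          (∀ e : Fin n × Fin N, μ.map (fun ω => A ω e.1 e.2) = omegaDist p) →
          μ {ω | (∀ j, onesInColumn (A ω) j < n) ∧
                 frobeniusNorm (A ω - tildeMatrix (A ω)) ^ 2 ≤ c₁ * N}
            ≥ ENNReal.ofReal (1 - (2 / 3 : ℝ) ^ N - (N : ℝ) * c₂ ^ n) := by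
  classical
  obtain ⟨hp0, hp1⟩ := hp
  have h1p : (0:ℝ) < 1 - p := by linarith
  refine ⟨26 / (1 - p) ^ 3, by positivity, Real.exp (-((1 - p) ^ 2 / 4)),
    ⟨Real.exp_pos _, ?_⟩, ?_⟩
  · rw [Real.exp_lt_one_iff]; nlinarith
  intro n N hn hN Ω' mΩ' μ hμ A hAmeas hAindep hAdist
  set c₂ : ℝ := Real.exp (-((1 - p) ^ 2 / 4)) with hc₂def
  set q : ℝ := -p / (1 - p) with hqdef
  have hqneg : q < 0 := div_neg_of_neg_of_pos (by linarith) h1p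
  have hq_ne : q ≠ 1 := by linarith
  have hn0 : (0:ℝ) < n := by exact_mod_cast hn
  set X : Fin n × Fin N → Ω' → ℝ := (fun (e : Fin n × Fin N) ω => A ω e.1 e.2) with hXdef
  have hXmeas : ∀ e, Measurable (X e) := fun e => hAmeas e.1 e.2
  set g : ℝ → ℝ := fun x => ind1 x - p with hgdef
  have hgmeas : Measurable g := ind1_measurable.sub measurable_const
  set Y : Fin n × Fin N → Ω' → ℝ := fun e ω => g (X e ω) with hYdef
  have hYmeas : ∀ e, Measurable (Y e) := fun e => hgmeas.comp (hXmeas e)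
  have hYabs : ∀ e ω, |Y e ω| ≤ 1 := fun e ω => abs_ind1_sub_le hp0.le hp1.le _
  set S : Fin N → Ω' → ℝ := fun j ω => ∑ i, Y (i, j) ω with hSdef
  have hSmeas : ∀ j, Measurable (S j) := fun j => Finset.measurable_sum _ fun i _ => hYmeas _
  have hSabs : ∀ j ω, |S j ω| ≤ n := by
    intro j ω
    calc |∑ i, Y (i, j) ω| ≤ ∑ i, |Y (i, j) ω| := Finset.abs_sum_le_sum_abs _ _
      _ ≤ ∑ _i : Fin n, (1:ℝ) := Finset.sum_le_sum fun i _ => hYabs _ _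
      _ = n := by simp
  set Z : Fin N → Ω' → ℝ := fun j ω => (S j ω) ^ 2 / n with hZdef
  have hZmeas : ∀ j, Measurable (Z j) := fun j => ((hSmeas j).pow_const 2).div_const _
  have hZnonneg : ∀ j ω, 0 ≤ Z j ω := fun j ω => div_nonneg (sq_nonneg _) (Nat.cast_nonneg n)
  have hZle : ∀ j ω, Z j ω ≤ n := by
    intro j ω
    rw [div_le_iff₀ hn0]
    have h := hSabs j ω
    nlinarith [abs_nonneg (S j ω), sq_abs (S j ω)]
  -- integrability of bounded exponentials
  have hIntExp : ∀ (W : Ω' → ℝ) (C t : ℝ), Measurable W → (∀ ω, |W ω| ≤ C) →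
      Integrable (fun ω => Real.exp (t * W ω)) μ := by
    intro W C t hWm hWb
    refine Integrable.mono' (integrable_const (Real.exp (|t| * C)))
      ((hWm.const_mul t).exp.aestronglyMeasurable) (ae_of_all _ fun ω => ?_)
    rw [Real.norm_eq_abs, Real.abs_exp]
    apply Real.exp_le_exp.2
    calc t * W ω ≤ |t * W ω| := le_abs_self _
      _ = |t| * |W ω| := abs_mul _ _
      _ ≤ |t| * C := mul_le_mul_of_nonneg_left (hWb ω) (abs_nonneg t)
  -- Chernoff helper
  have chern : ∀ (W : Ω' → ℝ) (C t ε B : ℝ), Measurable W → (∀ ω, |W ω| ≤ C) → 0 ≤ t →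
      mgf W μ t ≤ B → (μ {ω | ε ≤ W ω}).toReal ≤ Real.exp (-t * ε) * B := by
    intro W C t ε B hWm hWb ht hB
    refine (measure_ge_le_exp_mul_mgf ε ht (hIntExp W C t hWm hWb)).trans ?_
    exact mul_le_mul_of_nonneg_left hB (Real.exp_pos _).le
  -- mgf of a single entry
  have hmgfY : ∀ e (t : ℝ), mgf (Y e) μ t
      = p * Real.exp (t * (1 - p)) + (1 - p) * Real.exp (t * (0 - p)) := by
    intro e t
    have hfm : Measurable (fun x => Real.exp (t * g x)) := (hgmeas.const_mul t).exp
    have h1 : mgf (Y e) μ t = ∫ x, Real.exp (t * g x) ∂(μ.map (X e)) := by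
      rw [integral_map (hXmeas e).aemeasurable hfm.aestronglyMeasurable]
      rfl
    rw [h1, show μ.map (X e) = omegaDist p from hAdist e,
      integral_omegaDist hp0.le hp1.le _ hfm]
    have hg1 : g 1 = 1 - p := by simp [hgdef, ind1]
    have hgq : g (-p / (1 - p)) = 0 - p := by
      have : (-p / (1 - p) : ℝ) ≠ 1 := by rw [← hqdef]; exact hq_ne
      simp [hgdef, ind1, this]
    rw [hg1, hgq]
  -- independence within a column
  have hYind : ∀ j, iIndepFun (fun i => Y (i, j)) μ := by
    intro j
    have hinj : Function.Injective (fun i : Fin n => ((i, j) : Fin n × Fin N)) := by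
      intro a b hab
      simpa using congrArg Prod.fst hab
    have h1 : iIndepFun (fun i : Fin n => X (i, j)) μ :=
      iIndepFun_precomp _ hinj hAindep
    exact h1.comp (fun _ => g) (fun _ => hgmeas)
  -- mgf of S j
  have hmgfS : ∀ j (t : ℝ), |t| ≤ 1 → mgf (S j) μ t ≤ Real.exp ((n : ℝ) * t ^ 2 / 4) := by
    intro j t ht
    have hsum : S j = ∑ i : Fin n, (fun ω => Y (i, j) ω) := by
      funext ω; rw [Finset.sum_apply]
    have heq : mgf (S j) μ t = ∏ i : Fin n, mgf (fun ω => Y (i, j) ω) μ t := by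
      rw [hsum]
      exact (hYind j).mgf_sum (fun i => hYmeas _) Finset.univ
    rw [heq]
    calc ∏ i : Fin n, mgf (fun ω => Y (i, j) ω) μ t
        ≤ ∏ _i : Fin n, Real.exp (t ^ 2 / 4) := by
          refine Finset.prod_le_prod (fun i _ => mgf_nonneg) (fun i _ => ?_)
          rw [hmgfY (i, j) t]
          exact entry_mgf_bound hp0 hp1 ht
      _ = Real.exp ((n:ℝ) * (t ^ 2 / 4)) := by
          rw [Finset.prod_const, Finset.card_univ, Fintype.card_fin, ← Real.exp_nat_mul]
      _ = Real.exp ((n:ℝ) * t ^ 2 / 4) := by congr 1; ring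
  have hmgfSneg : ∀ j (t : ℝ), |t| ≤ 1 →
      mgf (fun ω => -S j ω) μ t ≤ Real.exp ((n : ℝ) * t ^ 2 / 4) := by
    intro j t ht
    have h1 : mgf (fun ω => -S j ω) μ t = mgf (S j) μ (-t) := by
      unfold mgf
      congr 1
      funext ω
      ring_nf
    rw [h1]
    have := hmgfS j (-t) (by rwa [abs_neg])
    simpa using this
  -- Column count tail bound
  have hStail : ∀ j, (μ {ω | (1 - p) / 2 * n ≤ S j ω}).toReal ≤ c₂ ^ n := by
    intro j
    have ht1 : |1 - p| ≤ 1 := by rw [abs_of_nonneg h1p.le]; linarith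
    have h := chern (S j) n (1 - p) ((1 - p) / 2 * n) (Real.exp ((n:ℝ) * (1 - p) ^ 2 / 4))
      (hSmeas j) (hSabs j) h1p.le (hmgfS j (1 - p) ht1)
    refine h.trans ?_
    rw [← Real.exp_add, hc₂def, ← Real.exp_nat_mul]
    apply Real.exp_le_exp.2
    apply le_of_eq
    ring
  -- Z tail bound
  have hZtail : ∀ j (m : ℕ), (μ {ω | (m:ℝ) ≤ Z j ω}).toReal ≤ 2 * Real.exp (-(m:ℝ) / 2) := by
    intro j m
    by_cases hmn : (m:ℝ) ≤ n
    · set r := Real.sqrt ((n:ℝ) * m) with hrdef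
      have hr0 : 0 ≤ r := Real.sqrt_nonneg _
      have hsub : {ω | (m:ℝ) ≤ Z j ω} ⊆ {ω | r ≤ S j ω} ∪ {ω | r ≤ -S j ω} := by
        intro ω hω
        simp only [Set.mem_setOf_eq] at hω
        have h1 : (n:ℝ) * m ≤ (S j ω) ^ 2 := by
          rw [hZdef] at hω
          have := (le_div_iff₀ hn0).1 hω
          linarith
        have h2 : r ≤ |S j ω| := by
          rw [hrdef, ← Real.sqrt_sq_eq_abs]
          exact Real.sqrt_le_sqrt h1
        rcases abs_choice (S j ω) with hc | hc
        · left; rw [Set.mem_setOf_eq]; rw [hc] at h2; exact h2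
        · right; rw [Set.mem_setOf_eq]; rw [hc] at h2; linarith
      have hU : (μ {ω | (m:ℝ) ≤ Z j ω}).toReal
          ≤ (μ {ω | r ≤ S j ω}).toReal + (μ {ω | r ≤ -S j ω}).toReal := by
        have hle : μ {ω | (m:ℝ) ≤ Z j ω} ≤ μ {ω | r ≤ S j ω} + μ {ω | r ≤ -S j ω} :=
          (measure_mono hsub).trans (measure_union_le _ _)
        have hfin : μ {ω | r ≤ S j ω} + μ {ω | r ≤ -S j ω} ≠ ⊤ :=
          ENNReal.add_ne_top.2 ⟨measure_ne_top μ _, measure_ne_top μ _⟩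
        have := ENNReal.toReal_mono hfin hle
        rwa [ENNReal.toReal_add (measure_ne_top μ _) (measure_ne_top μ _)] at this
      have key : ∀ W : Ω' → ℝ, Measurable W → (∀ ω, |W ω| ≤ n) →
          (∀ t : ℝ, |t| ≤ 1 → mgf W μ t ≤ Real.exp ((n:ℝ) * t ^ 2 / 4)) →
          (μ {ω | r ≤ W ω}).toReal ≤ Real.exp (-(m:ℝ) / 2) := by
        intro W hWm hWb hWmgf
        rcases le_or_gt (4 * (m:ℝ)) n with hcase | hcase
        · set t := 2 * Real.sqrt ((m:ℝ) / n) with htdef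
          have ht0 : 0 ≤ t := by positivity
          have ht2 : t ^ 2 = 4 * (m:ℝ) / n := by
            rw [htdef, mul_pow, Real.sq_sqrt (by positivity)]; ring
          have ht1 : |t| ≤ 1 := by
            rw [abs_of_nonneg ht0]
            nlinarith [ht2, (div_le_one hn0).2 (by linarith : 4 * (m:ℝ) ≤ n)]
          have htr : t * r = 2 * m := by
            rw [htdef, hrdef, mul_assoc, ← Real.sqrt_mul (by positivity)]
            have harg : (m:ℝ) / n * ((n:ℝ) * m) = (m:ℝ) ^ 2 := by
              field_simp
            rw [harg, Real.sqrt_sq (Nat.cast_nonneg m)]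
          have hc := chern W n t r (Real.exp ((n:ℝ) * t ^ 2 / 4)) hWm hWb ht0 (hWmgf t ht1)
          refine hc.trans ?_
          rw [← Real.exp_add]
          apply Real.exp_le_exp.2
          have h1 : (n:ℝ) * t ^ 2 / 4 = m := by
            rw [ht2]; field_simp
          have h2 : -t * r = -(2 * m) := by rw [neg_mul, htr]
          rw [h2, h1]
          linarith [Nat.cast_nonneg (α := ℝ) m]
        · have hrge : (n:ℝ) / 4 + m / 2 ≤ r := by
            rw [hrdef]
            have hx : 0 ≤ (n:ℝ) / 4 + m / 2 := by positivity
            rw [show ((n:ℝ) / 4 + m / 2) = Real.sqrt (((n:ℝ) / 4 + m / 2) ^ 2) from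
              (Real.sqrt_sq hx).symm]
            apply Real.sqrt_le_sqrt
            nlinarith [hn0.le, Nat.cast_nonneg (α := ℝ) m]
          have hc := chern W n 1 r (Real.exp ((n:ℝ) * 1 ^ 2 / 4)) hWm hWb zero_le_one
            (hWmgf 1 (by norm_num))
          refine hc.trans ?_
          rw [← Real.exp_add]
          apply Real.exp_le_exp.2
          nlinarith [hrge]
      have hA := key (S j) (hSmeas j) (hSabs j) (hmgfS j)
      have hB := key (fun ω => -S j ω) (hSmeas j).neg
        (fun ω => by rw [abs_neg]; exact hSabs j ω) (hmgfSneg j)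
      calc (μ {ω | (m:ℝ) ≤ Z j ω}).toReal
          ≤ (μ {ω | r ≤ S j ω}).toReal + (μ {ω | r ≤ -S j ω}).toReal := hU
        _ ≤ Real.exp (-(m:ℝ) / 2) + Real.exp (-(m:ℝ) / 2) := add_le_add hA hB
        _ = 2 * Real.exp (-(m:ℝ) / 2) := by ring
    · have hempty : {ω | (m:ℝ) ≤ Z j ω} = ∅ := by
        ext ω
        simp only [Set.mem_setOf_eq, Set.mem_empty_iff_false, iff_false, not_le]
        exact lt_of_le_of_lt (hZle j ω) (lt_of_not_ge hmn)
      rw [hempty]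
      simp
      positivity
  -- mgf of Z j at 1/4
  have hmgfZ : ∀ j, mgf (Z j) μ (1/4) ≤ 14 := by
    intro j
    have hslabmeas : ∀ m : ℕ, MeasurableSet {ω | (m:ℝ) ≤ Z j ω ∧ Z j ω < m + 1} :=
      fun m => (measurableSet_le measurable_const (hZmeas j)).inter
        (measurableSet_lt (hZmeas j) measurable_const)
    have hpt : ∀ ω, Real.exp ((1:ℝ)/4 * Z j ω) ≤ ∑ m ∈ Finset.range (n+1),
        Set.indicator {ω' | (m:ℝ) ≤ Z j ω' ∧ Z j ω' < m + 1}
          (fun _ => Real.exp (((m:ℝ)+1)/4)) ω := by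
      intro ω
      set m₀ := ⌊Z j ω⌋₊ with hm₀
      have h1 : (m₀:ℝ) ≤ Z j ω := Nat.floor_le (hZnonneg j ω)
      have h2 : Z j ω < m₀ + 1 := Nat.lt_floor_add_one _
      have hm₀mem : m₀ ∈ Finset.range (n+1) := by
        rw [Finset.mem_range, Nat.lt_succ_iff]
        have : (m₀:ℝ) ≤ n := h1.trans (hZle j ω)
        exact_mod_cast this
      have hsingle : Set.indicator {ω' | (m₀:ℝ) ≤ Z j ω' ∧ Z j ω' < m₀ + 1}
          (fun _ => Real.exp (((m₀:ℝ)+1)/4)) ω ≤ ∑ m ∈ Finset.range (n+1),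
          Set.indicator {ω' | (m:ℝ) ≤ Z j ω' ∧ Z j ω' < m + 1}
          (fun _ => Real.exp (((m:ℝ)+1)/4)) ω :=
        Finset.single_le_sum
          (f := fun m : ℕ => Set.indicator {ω' | (m:ℝ) ≤ Z j ω' ∧ Z j ω' < m + 1}
            (fun _ => Real.exp (((m:ℝ)+1)/4)) ω)
          (fun m _ => Set.indicator_nonneg (fun _ _ => (Real.exp_pos _).le) _) hm₀mem
      refine le_trans ?_ hsingle
      have hmem : ω ∈ {ω' | (m₀:ℝ) ≤ Z j ω' ∧ Z j ω' < m₀ + 1} := ⟨h1, h2⟩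
      rw [Set.indicator_of_mem hmem]
      apply Real.exp_le_exp.2
      linarith
    have hint1 : Integrable (fun ω => Real.exp ((1:ℝ)/4 * Z j ω)) μ :=
      hIntExp (Z j) n (1/4) (hZmeas j)
        (fun ω => by rw [abs_of_nonneg (hZnonneg j ω)]; exact hZle j ω)
    have hintInd : ∀ m : ℕ, Integrable
        (Set.indicator {ω' | (m:ℝ) ≤ Z j ω' ∧ Z j ω' < m + 1}
          (fun _ => Real.exp (((m:ℝ)+1)/4))) μ :=
      fun m => (integrable_const _).indicator (hslabmeas m)
    have hstep1 : mgf (Z j) μ (1/4) ≤ ∑ m ∈ Finset.range (n+1),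
        Real.exp (((m:ℝ)+1)/4) * (μ {ω | (m:ℝ) ≤ Z j ω}).toReal := by
      calc mgf (Z j) μ (1/4) = ∫ ω, Real.exp ((1:ℝ)/4 * Z j ω) ∂μ := rfl
        _ ≤ ∫ ω, (∑ m ∈ Finset.range (n+1),
            Set.indicator {ω' | (m:ℝ) ≤ Z j ω' ∧ Z j ω' < m + 1}
              (fun _ => Real.exp (((m:ℝ)+1)/4)) ω) ∂μ :=
            integral_mono hint1 (integrable_finset_sum _ fun m _ => hintInd m) hpt
        _ = ∑ m ∈ Finset.range (n+1), ∫ ω,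
            Set.indicator {ω' | (m:ℝ) ≤ Z j ω' ∧ Z j ω' < m + 1}
              (fun _ => Real.exp (((m:ℝ)+1)/4)) ω ∂μ :=
            integral_finset_sum _ (fun m _ => hintInd m)
        _ ≤ ∑ m ∈ Finset.range (n+1),
            Real.exp (((m:ℝ)+1)/4) * (μ {ω | (m:ℝ) ≤ Z j ω}).toReal := by
            refine Finset.sum_le_sum fun m _ => ?_
            rw [integral_indicator_const _ (hslabmeas m), smul_eq_mul, mul_comm]
            refine mul_le_mul_of_nonneg_left ?_ (Real.exp_pos _).le
            refine ENNReal.toReal_mono (measure_ne_top μ _) (measure_mono ?_)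
            exact fun ω hω => hω.1
    refine hstep1.trans ?_
    have hgeom : Real.exp (-(1:ℝ)/4) < 1 := by
      rw [Real.exp_lt_one_iff]; norm_num
    calc ∑ m ∈ Finset.range (n+1), Real.exp (((m:ℝ)+1)/4) * (μ {ω | (m:ℝ) ≤ Z j ω}).toReal
        ≤ ∑ m ∈ Finset.range (n+1), Real.exp (((m:ℝ)+1)/4) * (2 * Real.exp (-(m:ℝ)/2)) := by
          refine Finset.sum_le_sum fun m _ => ?_
          exact mul_le_mul_of_nonneg_left (hZtail j m) (Real.exp_pos _).le
      _ = ∑ m ∈ Finset.range (n+1), 2 * Real.exp (1/4) * (Real.exp (-(1:ℝ)/4)) ^ m := by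
          refine Finset.sum_congr rfl fun m _ => ?_
          calc Real.exp (((m:ℝ)+1)/4) * (2 * Real.exp (-(m:ℝ)/2))
              = 2 * Real.exp (((m:ℝ)+1)/4 + -(m:ℝ)/2) := by rw [Real.exp_add]; ring
            _ = 2 * Real.exp ((1:ℝ)/4 + (m:ℝ) * (-(1:ℝ)/4)) := by
                rw [show ((m:ℝ)+1)/4 + -(m:ℝ)/2 = (1:ℝ)/4 + (m:ℝ) * (-(1:ℝ)/4) by ring]
            _ = 2 * Real.exp (1/4) * (Real.exp (-(1:ℝ)/4)) ^ m := by
                rw [Real.exp_add, Real.exp_nat_mul]; ring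
      _ = 2 * Real.exp (1/4) * ∑ m ∈ Finset.range (n+1), (Real.exp (-(1:ℝ)/4)) ^ m := by
          rw [Finset.mul_sum]
      _ ≤ 2 * Real.exp (1/4) * (1 - Real.exp (-(1:ℝ)/4))⁻¹ := by
          exact mul_le_mul_of_nonneg_left (sum_geom_le (Real.exp_pos _).le hgeom _)
            (by positivity)
      _ ≤ 14 := by
          have he1 : Real.exp (1/4 : ℝ) ≤ 21/16 := by
            have habs14 : |(1/4 : ℝ)| ≤ 1 := by rw [abs_of_nonneg] <;> norm_num
            have := exp_le_one_add_add_sq habs14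
            norm_num at this
            linarith
          have he2 : (5:ℝ)/4 ≤ Real.exp (1/4 : ℝ) := by
            have := Real.add_one_le_exp (1/4 : ℝ)
            linarith
          have he3 : Real.exp (-(1:ℝ)/4) ≤ 4/5 := by
            rw [show -(1:ℝ)/4 = -(1/4 : ℝ) by ring, Real.exp_neg]
            rw [inv_le_comm₀ (Real.exp_pos _) (by norm_num)]
            linarith
          have he4 : (1 - Real.exp (-(1:ℝ)/4))⁻¹ ≤ 5 := by
            rw [inv_le_comm₀ (by linarith) (by norm_num)]
            linarith
          have hpos : (0:ℝ) < 1 - Real.exp (-(1:ℝ)/4) := by linarith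
          have h0I : (0:ℝ) ≤ (1 - Real.exp (-(1:ℝ)/4))⁻¹ := inv_nonneg.2 hpos.le
          calc 2 * Real.exp (1/4) * (1 - Real.exp (-(1:ℝ)/4))⁻¹
              ≤ 2 * (21/16) * 5 := by
                apply mul_le_mul (by nlinarith [Real.exp_pos (1/4:ℝ)]) he4 h0I (by norm_num)
            _ ≤ 14 := by norm_num
  -- sum of Z over columns
  set ZS : Ω' → ℝ := fun ω => ∑ j, Z j ω with hZSdef
  have hZSmeas : Measurable ZS := Finset.measurable_sum _ fun j _ => hZmeas j
  have hZSabs : ∀ ω, |ZS ω| ≤ (n:ℝ) * N := by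
    intro ω
    rw [hZSdef]
    calc |∑ j, Z j ω| ≤ ∑ j, |Z j ω| := Finset.abs_sum_le_sum_abs _ _
      _ ≤ ∑ _j : Fin N, (n:ℝ) := Finset.sum_le_sum fun j _ => by
          rw [abs_of_nonneg (hZnonneg j ω)]; exact hZle j ω
      _ = (n:ℝ) * N := by simp [mul_comm]
  have hZind : iIndepFun Z μ := by
    have hcols := iIndepFun_columns (X := X) hXmeas hAindep
    set φ : (Fin n → ℝ) → ℝ := fun v => (∑ i, (ind1 (v i) - p)) ^ 2 / n with hφdef
    have hφmeas : Measurable φ :=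
      ((Finset.measurable_sum _ fun i _ =>
        (ind1_measurable.comp (measurable_pi_apply i)).sub measurable_const).pow_const 2).div_const _
    exact hcols.comp (fun _ => φ) (fun _ => hφmeas)
  have hmgfZS : mgf ZS μ (1/4) ≤ 14 ^ N := by
    have hsum : ZS = ∑ j : Fin N, Z j := by
      funext ω; rw [Finset.sum_apply]
    rw [hsum, hZind.mgf_sum (fun j => hZmeas j) Finset.univ]
    calc ∏ j : Fin N, mgf (Z j) μ (1/4) ≤ ∏ _j : Fin N, (14:ℝ) :=
          Finset.prod_le_prod (fun j _ => mgf_nonneg) (fun j _ => hmgfZ j)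
      _ = 14 ^ N := by simp
  have hZStail : (μ {ω | 13 * (N:ℝ) ≤ ZS ω}).toReal ≤ (2/3 : ℝ) ^ N := by
    have hc := chern ZS ((n:ℝ) * N) (1/4) (13 * N) ((14:ℝ) ^ N) hZSmeas hZSabs
      (by norm_num) hmgfZS
    refine hc.trans ?_
    have hexp : Real.exp (-(1/4 : ℝ) * (13 * N)) = (Real.exp (-(13/4 : ℝ))) ^ N := by
      rw [← Real.exp_nat_mul]; congr 1; ring
    rw [hexp, ← mul_pow]
    apply pow_le_pow_left₀ (by positivity)
    have he3 : (20:ℝ) < Real.exp 3 := by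
      have h9 := Real.exp_one_gt_d9
      have h3 : Real.exp (3:ℝ) = (Real.exp 1) ^ 3 := by
        rw [show (3:ℝ) = ((3:ℕ):ℝ) by norm_num, ← Real.exp_nat_mul]; ring_nf
      have hc3 : (2.7182818283:ℝ) ^ 3 ≤ (Real.exp 1) ^ 3 :=
        pow_le_pow_left₀ (by norm_num) h9.le 3
      rw [h3]; nlinarith [hc3]
    have he14 : (5:ℝ)/4 ≤ Real.exp (1/4 : ℝ) := by
      have := Real.add_one_le_exp (1/4 : ℝ); linarith
    have he134 : (25:ℝ) ≤ Real.exp (13/4 : ℝ) := by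
      have hsplit : Real.exp (13/4 : ℝ) = Real.exp 3 * Real.exp (1/4 : ℝ) := by
        rw [← Real.exp_add]; norm_num
      rw [hsplit]
      nlinarith [Real.exp_pos (1/4 : ℝ)]
    rw [Real.exp_neg, inv_mul_le_iff₀ (Real.exp_pos _)]
    nlinarith
  -- the a.s. values event
  have hval : ∀ e : Fin n × Fin N, μ {ω | ¬(A ω e.1 e.2 = 1 ∨ A ω e.1 e.2 = q)} = 0 := by
    intro e
    have hs : MeasurableSet (({1, q} : Set ℝ))ᶜ :=
      (MeasurableSet.insert (measurableSet_singleton q) 1).compl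
    have hpre : {ω | ¬(A ω e.1 e.2 = 1 ∨ A ω e.1 e.2 = q)} = X e ⁻¹' (({1, q} : Set ℝ))ᶜ := by
      ext ω
      simp [hXdef, Set.mem_preimage]
    rw [hpre, ← Measure.map_apply (hXmeas e) hs, hAdist e, hqdef]
    exact omegaDist_compl
  -- the good event
  set G : Set Ω' := ((⋂ j, {ω | S j ω < (1 - p) / 2 * n}) ∩ {ω | ZS ω < 13 * N}) ∩
      ⋂ e : Fin n × Fin N, {ω | A ω e.1 e.2 = 1 ∨ A ω e.1 e.2 = q} with hGdef
  have hGmeas : MeasurableSet G := by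
    refine (MeasurableSet.inter (MeasurableSet.inter ?_ ?_) ?_)
    · exact MeasurableSet.iInter fun j => measurableSet_lt (hSmeas j) measurable_const
    · exact measurableSet_lt hZSmeas measurable_const
    · refine MeasurableSet.iInter fun e => ?_
      have : {ω | A ω e.1 e.2 = 1 ∨ A ω e.1 e.2 = q} = X e ⁻¹' ({1, q} : Set ℝ) := by
        ext ω; simp [hXdef]
      rw [this]
      exact (hXmeas e) ((MeasurableSet.insert (measurableSet_singleton q) 1))
  -- complement bound
  have hGc : μ Gᶜ ≤ ENNReal.ofReal ((2/3 : ℝ) ^ N + (N:ℝ) * c₂ ^ n) := by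
    have hsubc : Gᶜ ⊆ ((⋃ j, {ω | (1 - p) / 2 * n ≤ S j ω}) ∪ {ω | 13 * (N:ℝ) ≤ ZS ω}) ∪
        ⋃ e : Fin n × Fin N, {ω | ¬(A ω e.1 e.2 = 1 ∨ A ω e.1 e.2 = q)} := by
      intro ω hω
      rw [hGdef] at hω
      simp only [Set.mem_compl_iff, Set.mem_inter_iff, Set.mem_iInter, Set.mem_setOf_eq,
        not_and_or, not_forall, not_lt] at hω
      rcases hω with (h | h) | h
      · rcases h with ⟨j, hj⟩
        exact Or.inl (Or.inl (Set.mem_iUnion.2 ⟨j, hj⟩))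
      · exact Or.inl (Or.inr h)
      · rcases h with ⟨e, he⟩
        exact Or.inr (Set.mem_iUnion.2 ⟨e, he⟩)
    refine (measure_mono hsubc).trans ?_
    refine (measure_union_le _ _).trans ?_
    have hz : μ (⋃ e : Fin n × Fin N, {ω | ¬(A ω e.1 e.2 = 1 ∨ A ω e.1 e.2 = q)}) = 0 := by
      refine le_antisymm ?_ (zero_le)
      refine (measure_iUnion_le _).trans ?_
      rw [tsum_congr hval]
      simp
    rw [hz, add_zero]
    refine (measure_union_le _ _).trans ?_
    have h1 : μ (⋃ j, {ω | (1 - p) / 2 * n ≤ S j ω}) ≤ ENNReal.ofReal ((N:ℝ) * c₂ ^ n) := by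
      refine (measure_iUnion_le _).trans ?_
      rw [tsum_fintype]
      have hone : ∀ j, μ {ω | (1 - p) / 2 * n ≤ S j ω} ≤ ENNReal.ofReal (c₂ ^ n) := by
        intro j
        rw [ENNReal.le_ofReal_iff_toReal_le (measure_ne_top μ _) (by positivity)]
        exact hStail j
      calc ∑ j : Fin N, μ {ω | (1 - p) / 2 * n ≤ S j ω}
          ≤ ∑ _j : Fin N, ENNReal.ofReal (c₂ ^ n) := Finset.sum_le_sum fun j _ => hone j
        _ = (N : ℕ) • ENNReal.ofReal (c₂ ^ n) := by simp
        _ = ENNReal.ofReal ((N:ℝ) * c₂ ^ n) := by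
            rw [nsmul_eq_mul, ← ENNReal.ofReal_natCast N,
              ← ENNReal.ofReal_mul (Nat.cast_nonneg N)]
    have h2 : μ {ω | 13 * (N:ℝ) ≤ ZS ω} ≤ ENNReal.ofReal ((2/3 : ℝ) ^ N) := by
      rw [ENNReal.le_ofReal_iff_toReal_le (measure_ne_top μ _) (by positivity)]
      exact hZStail
    calc μ (⋃ j, {ω | (1 - p) / 2 * n ≤ S j ω}) + μ {ω | 13 * (N:ℝ) ≤ ZS ω}
        ≤ ENNReal.ofReal ((N:ℝ) * c₂ ^ n) + ENNReal.ofReal ((2/3 : ℝ) ^ N) :=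
          add_le_add h1 h2
      _ = ENNReal.ofReal ((2/3 : ℝ) ^ N + (N:ℝ) * c₂ ^ n) := by
          rw [← ENNReal.ofReal_add (by positivity) (by positivity), add_comm]
  -- inclusion into the target event
  have hGsub : G ⊆ {ω | (∀ j, onesInColumn (A ω) j < n) ∧
      frobeniusNorm (A ω - tildeMatrix (A ω)) ^ 2 ≤ 26 / (1 - p) ^ 3 * N} := by
    intro ω hω
    rw [hGdef] at hω
    obtain ⟨⟨hcol, hZSω⟩, hvals⟩ := hω
    rw [Set.mem_iInter] at hcol
    rw [Set.mem_iInter] at hvals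
    rw [Set.mem_setOf_eq] at hZSω
    have hScard : ∀ j, S j ω = ((onesInColumn (A ω) j : ℝ)) - p * n := by
      intro j
      show (∑ i, Y (i, j) ω) = _
      have : ∀ i, Y (i, j) ω = (if A ω i j = 1 then (1:ℝ) else 0) - p := by
        intro i
        simp [hYdef, hgdef, ind1, hXdef]
      rw [Finset.sum_congr rfl (fun i _ => this i), Finset.sum_sub_distrib,
        Finset.sum_boole, Finset.sum_const]
      simp only [onesInColumn, Finset.card_univ, Fintype.card_fin, nsmul_eq_mul]
      ring_nf
    have hkub : ∀ j, ((onesInColumn (A ω) j : ℝ)) < (1 + p) / 2 * n := by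
      intro j
      have := hcol j
      rw [Set.mem_setOf_eq, hScard j] at this
      linarith
    have hklt : ∀ j, onesInColumn (A ω) j < n := by
      intro j
      have h1 : ((onesInColumn (A ω) j : ℝ)) < n := by
        have := hkub j
        nlinarith
      exact_mod_cast h1
    have hden : ∀ j, (1 - p) / 2 * n < (n:ℝ) - onesInColumn (A ω) j := by
      intro j
      have := hkub j
      linarith [hkub j]
    have hdenpos : ∀ j, (0:ℝ) < (n:ℝ) - onesInColumn (A ω) j := by
      intro j
      have := hden j
      nlinarith
    refine ⟨hklt, ?_⟩
    have hfr : frobeniusNorm (A ω - tildeMatrix (A ω)) ^ 2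
        = ∑ j, ∑ i, ((A ω - tildeMatrix (A ω)) i j) ^ 2 := by
      rw [frobeniusNorm, Real.sq_sqrt (by positivity)]
      exact Finset.sum_comm
    rw [hfr]
    have hcolsum : ∀ j, (∑ i, ((A ω - tildeMatrix (A ω)) i j) ^ 2)
        ≤ 2 / (1 - p) ^ 3 * Z j ω := by
      intro j
      set k : ℝ := (onesInColumn (A ω) j : ℝ) with hkdef
      have hkne : (n:ℝ) - k ≠ 0 := (hdenpos j).ne'
      have hterm : ∀ i, ((A ω - tildeMatrix (A ω)) i j) ^ 2
          = if A ω i j = 1 then 0 else (k - p * n) ^ 2 / (((n:ℝ) - k) ^ 2 * (1 - p) ^ 2) := by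
        intro i
        rw [Matrix.sub_apply, tildeMatrix, Matrix.of_apply]
        by_cases hc : A ω i j = 1
        · rw [if_pos hc, if_pos hc, hc]
          ring
        · rw [if_neg hc, if_neg hc]
          have hvale : A ω i j = q := (hvals (i, j)).resolve_left hc
          rw [hvale, hqdef, ← hkdef]
          field_simp
          ring
      rw [Finset.sum_congr rfl (fun i _ => hterm i), Finset.sum_ite, Finset.sum_const,
        Finset.sum_const]
      have hcard : ((Finset.univ.filter (fun i => ¬A ω i j = 1)).card : ℝ) = (n:ℝ) - k := by
        have hsplit := Finset.card_filter_add_card_filter_not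
          (s := (Finset.univ : Finset (Fin n))) (p := fun i => A ω i j = 1)
        rw [hkdef]
        simp only [onesInColumn]
        have : (Finset.univ.filter (fun i => A ω i j = 1)).card
            + (Finset.univ.filter (fun i => ¬A ω i j = 1)).card = n := by
          simpa using hsplit
        push_cast
        have h2 : ((Finset.univ.filter (fun i => ¬A ω i j = 1)).card : ℝ)
            = (n:ℝ) - ((Finset.univ.filter (fun i => A ω i j = 1)).card : ℝ) := by
          have := congrArg (fun x : ℕ => (x : ℝ)) this
          push_cast at this
          linarith
        linarith [h2]
      rw [smul_zero, zero_add, nsmul_eq_mul, hcard]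
      have hSval : S j ω = k - p * n := hScard j
      have heq : ((n:ℝ) - k) * ((k - p * n) ^ 2 / (((n:ℝ) - k) ^ 2 * (1 - p) ^ 2))
          = (k - p * n) ^ 2 / (((n:ℝ) - k) * (1 - p) ^ 2) := by
        field_simp
      rw [heq]
      have hle1 : (k - p * n) ^ 2 / (((n:ℝ) - k) * (1 - p) ^ 2)
          ≤ (k - p * n) ^ 2 / ((1 - p) / 2 * n * (1 - p) ^ 2) := by
        apply div_le_div_of_nonneg_left (sq_nonneg _) (by positivity)
        have := hden j
        nlinarith [sq_nonneg (1 - p)]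
      refine hle1.trans (le_of_eq ?_)
      show _ = 2 / (1 - p) ^ 3 * (S j ω ^ 2 / (n:ℝ))
      rw [hSval]
      field_simp
    calc (∑ j, ∑ i, ((A ω - tildeMatrix (A ω)) i j) ^ 2)
        ≤ ∑ j, 2 / (1 - p) ^ 3 * Z j ω := Finset.sum_le_sum fun j _ => hcolsum j
      _ = 2 / (1 - p) ^ 3 * ZS ω := by rw [hZSdef, Finset.mul_sum]
      _ ≤ 2 / (1 - p) ^ 3 * (13 * N) := by
          apply mul_le_mul_of_nonneg_left (le_of_lt hZSω) (by positivity)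
      _ = 26 / (1 - p) ^ 3 * N := by ring
  -- final assembly
  have hsum_nonneg : (0:ℝ) ≤ (2/3 : ℝ) ^ N + (N:ℝ) * c₂ ^ n := by positivity
  calc ENNReal.ofReal (1 - (2/3 : ℝ) ^ N - (N:ℝ) * c₂ ^ n)
      = ENNReal.ofReal (1 - ((2/3 : ℝ) ^ N + (N:ℝ) * c₂ ^ n)) := by
        congr 1
        ring
    _ = 1 - ENNReal.ofReal ((2/3 : ℝ) ^ N + (N:ℝ) * c₂ ^ n) := by
        rw [ENNReal.ofReal_sub _ hsum_nonneg, ENNReal.ofReal_one]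
    _ ≤ 1 - μ Gᶜ := tsub_le_tsub_left hGc 1
    _ ≤ μ G := by
        rw [tsub_le_iff_right]
        have h : μ G + μ Gᶜ = 1 := by
          rw [measure_add_measure_compl hGmeas, measure_univ]
        exact h.ge
    _ ≤ μ {ω | (∀ j, onesInColumn (A ω) j < n) ∧
        frobeniusNorm (A ω - tildeMatrix (A ω)) ^ 2 ≤ 26 / (1 - p) ^ 3 * N} :=
        measure_mono hGsub
end

section
/- Let A ∈ R^{m×n} have rank r with singular value decomposition A = Σ_{k=1}^r σ_k u_k v_kᵀ (σ_k > 0, the u_k orthonormal in R^m, the v_k orthonormal in R^n). Then φ ∈ R^{m×n} is a subgradient of the nuclear norm ‖·‖_* at A if and only if φ = Σ_{k=1}^r u_k v_kᵀ + W for some W ∈ R^{m×n} with ‖W‖ ≤ 1 such that Wᵀ u_k = 0 and W v_k = 0 for all k = 1, …, r. -/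
open Matrix

/-- The spectral norm (largest singular value) of a real matrix. -/
noncomputable def matSpectralNorm {m n : Type*} [Fintype m] [Fintype n] [DecidableEq n]
    (A : Matrix m n ℝ) : ℝ :=
  ‖LinearMap.toContinuousLinearMap (Matrix.toEuclideanLin A)‖

theorem Matrix.isHermitian_transpose_mul_self {m n : Type*} [Fintype m] (A : Matrix m n ℝ) :
    (Aᵀ * A).IsHermitian := by
  simpa using Matrix.isHermitian_conjTranspose_mul_self A

/-- The nuclear norm (sum of singular values) of a real matrix, given as the sum of the
square roots of the eigenvalues of `Aᴴ A`. -/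
noncomputable def nuclearNorm {m n : Type*} [Fintype m] [Fintype n] [DecidableEq n]
    (A : Matrix m n ℝ) : ℝ :=
  ∑ j, Real.sqrt ((Matrix.isHermitian_transpose_mul_self A).eigenvalues j)

/-- The Frobenius inner product of two matrices. -/
def frobInner {m n : Type*} [Fintype m] [Fintype n] (A B : Matrix m n ℝ) : ℝ :=
  ∑ i, ∑ j, A i j * B i j

namespace NucAux
variable {m n r : ℕ}


variable {m n r : ℕ}

lemma dot_self_nonneg (x : Fin n → ℝ) : 0 ≤ x ⬝ᵥ x :=
  Finset.sum_nonneg fun _ _ => mul_self_nonneg _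

lemma enorm_eq (x : EuclideanSpace ℝ (Fin n)) : ‖x‖ = Real.sqrt ((x : Fin n → ℝ) ⬝ᵥ x) := by
  rw [EuclideanSpace.norm_eq]
  congr 1
  simp [dotProduct, Real.norm_eq_abs, sq_abs, sq]

lemma spec_nonneg (Z : Matrix (Fin m) (Fin n) ℝ) : 0 ≤ matSpectralNorm Z := norm_nonneg _

lemma spec_mulVec (Z : Matrix (Fin m) (Fin n) ℝ) (x : Fin n → ℝ) :
    Real.sqrt ((Z *ᵥ x) ⬝ᵥ (Z *ᵥ x)) ≤ matSpectralNorm Z * Real.sqrt (x ⬝ᵥ x) := by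
  have h := (LinearMap.toContinuousLinearMap (toEuclideanLin Z)).le_opNorm
      ((WithLp.equiv 2 (Fin n → ℝ)).symm x)
  have e1 : ‖(LinearMap.toContinuousLinearMap (toEuclideanLin Z))
      ((WithLp.equiv 2 (Fin n → ℝ)).symm x)‖ = Real.sqrt ((Z *ᵥ x) ⬝ᵥ (Z *ᵥ x)) := by
    rw [enorm_eq]; rfl
  have e2 : ‖((WithLp.equiv 2 (Fin n → ℝ)).symm x)‖ = Real.sqrt (x ⬝ᵥ x) := by
    rw [enorm_eq]; rfl
  rw [e1, e2] at h
  exact h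

lemma spec_le {Z : Matrix (Fin m) (Fin n) ℝ} {c : ℝ} (hc : 0 ≤ c)
    (h : ∀ x : Fin n → ℝ, Real.sqrt ((Z *ᵥ x) ⬝ᵥ (Z *ᵥ x)) ≤ c * Real.sqrt (x ⬝ᵥ x)) :
    matSpectralNorm Z ≤ c := by
  refine ContinuousLinearMap.opNorm_le_bound _ hc fun x => ?_
  have hx := h ((WithLp.equiv 2 (Fin n → ℝ)) x)
  have e1 : ‖(LinearMap.toContinuousLinearMap (toEuclideanLin Z)) x‖
      = Real.sqrt ((Z *ᵥ ((WithLp.equiv 2 (Fin n → ℝ)) x)) ⬝ᵥ (Z *ᵥ ((WithLp.equiv 2 (Fin n → ℝ)) x))) := by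
    rw [enorm_eq]; rfl
  have e2 : ‖x‖ = Real.sqrt (((WithLp.equiv 2 (Fin n → ℝ)) x) ⬝ᵥ ((WithLp.equiv 2 (Fin n → ℝ)) x)) := by
    rw [enorm_eq]; rfl
  rw [e1, e2]
  exact hx

lemma dot_le (x y : Fin n → ℝ) : x ⬝ᵥ y ≤ Real.sqrt (x ⬝ᵥ x) * Real.sqrt (y ⬝ᵥ y) := by
  have h := real_inner_le_norm ((WithLp.equiv 2 (Fin n → ℝ)).symm x) ((WithLp.equiv 2 (Fin n → ℝ)).symm y)
  have e : (inner ℝ ((WithLp.equiv 2 (Fin n → ℝ)).symm x) ((WithLp.equiv 2 (Fin n → ℝ)).symm y) : ℝ)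
      = x ⬝ᵥ y := by
    simp [PiLp.inner_apply, dotProduct, mul_comm]
  rw [e, enorm_eq, enorm_eq] at h
  exact h

lemma dot_mulVec_le (Z : Matrix (Fin m) (Fin n) ℝ) (x : Fin m → ℝ) (y : Fin n → ℝ) :
    x ⬝ᵥ (Z *ᵥ y) ≤ matSpectralNorm Z * (Real.sqrt (x ⬝ᵥ x) * Real.sqrt (y ⬝ᵥ y)) := by
  calc x ⬝ᵥ (Z *ᵥ y) ≤ Real.sqrt (x ⬝ᵥ x) * Real.sqrt ((Z *ᵥ y) ⬝ᵥ (Z *ᵥ y)) := dot_le _ _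
    _ ≤ Real.sqrt (x ⬝ᵥ x) * (matSpectralNorm Z * Real.sqrt (y ⬝ᵥ y)) :=
        mul_le_mul_of_nonneg_left (spec_mulVec Z y) (Real.sqrt_nonneg _)
    _ = matSpectralNorm Z * (Real.sqrt (x ⬝ᵥ x) * Real.sqrt (y ⬝ᵥ y)) := by ring




lemma mulVec_dot (Z : Matrix (Fin m) (Fin n) ℝ) (x : Fin n → ℝ) (w : Fin m → ℝ) :
    (Z *ᵥ x) ⬝ᵥ w = x ⬝ᵥ (Zᵀ *ᵥ w) := by
  rw [Matrix.dotProduct_mulVec, Matrix.vecMul_transpose, dotProduct_comm]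

lemma sum_dot_mulVec_eq_trace {f : Fin n → Fin n → ℝ}
    (hc : ∀ p q, ∑ j, f j p * f j q = if p = q then (1:ℝ) else 0)
    (M : Matrix (Fin n) (Fin n) ℝ) :
    ∑ j, f j ⬝ᵥ (M *ᵥ f j) = ∑ i, M i i := by
  calc ∑ j, f j ⬝ᵥ (M *ᵥ f j)
      = ∑ j, ∑ p, ∑ q, M p q * (f j p * f j q) := by
        refine Finset.sum_congr rfl fun j _ => ?_
        simp only [dotProduct, mulVec, Finset.mul_sum]
        exact Finset.sum_congr rfl fun p _ => Finset.sum_congr rfl fun q _ => by ring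
    _ = ∑ p, ∑ q, M p q * ∑ j, f j p * f j q := by
        rw [Finset.sum_comm]
        refine Finset.sum_congr rfl fun p _ => ?_
        rw [Finset.sum_comm]
        refine Finset.sum_congr rfl fun q _ => ?_
        rw [Finset.mul_sum]
    _ = ∑ p, M p p := by
        refine Finset.sum_congr rfl fun p _ => ?_
        simp [hc, mul_ite]
  
lemma vmv_mulVec (x : Fin m → ℝ) (y z : Fin n → ℝ) :
    Matrix.vecMulVec x y *ᵥ z = (y ⬝ᵥ z) • x := by
  ext i
  simp only [mulVec, vecMulVec_apply, dotProduct, Pi.smul_apply, smul_eq_mul, Finset.sum_mul]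
  exact Finset.sum_congr rfl fun j _ => by ring

lemma parseval {f : Fin n → Fin n → ℝ}
    (hc : ∀ p q, ∑ j, f j p * f j q = if p = q then (1:ℝ) else 0)
    (x y : Fin n → ℝ) : ∑ j, (f j ⬝ᵥ x) * (f j ⬝ᵥ y) = x ⬝ᵥ y := by
  have h := sum_dot_mulVec_eq_trace hc (Matrix.vecMulVec x y)
  have e : ∀ j, f j ⬝ᵥ (Matrix.vecMulVec x y *ᵥ f j) = (f j ⬝ᵥ x) * (f j ⬝ᵥ y) := fun j => by
    rw [vmv_mulVec, dotProduct_smul, smul_eq_mul,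
      dotProduct_comm (f j) x, dotProduct_comm y (f j)]
    ring
  rw [Finset.sum_congr rfl (fun j _ => e j)] at h
  rw [h]
  simp [vecMulVec_apply, dotProduct]

lemma frob_eq_trace (Z Y : Matrix (Fin m) (Fin n) ℝ) :
    frobInner Z Y = ∑ j, (Zᵀ * Y) j j := by
  simp only [frobInner, Matrix.mul_apply, transpose_apply]
  exact Finset.sum_comm

lemma frob_eq_sum_dot {f : Fin n → Fin n → ℝ}
    (hc : ∀ p q, ∑ j, f j p * f j q = if p = q then (1:ℝ) else 0)
    (Z Y : Matrix (Fin m) (Fin n) ℝ) :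
    frobInner Z Y = ∑ j, (Z *ᵥ f j) ⬝ᵥ (Y *ᵥ f j) := by
  rw [frob_eq_trace, ← sum_dot_mulVec_eq_trace hc (Zᵀ * Y)]
  refine Finset.sum_congr rfl fun j _ => ?_
  rw [← Matrix.mulVec_mulVec, ← mulVec_dot, dotProduct_comm]




noncomputable def ev (Y : Matrix (Fin m) (Fin n) ℝ) (j : Fin n) : ℝ :=
  (Matrix.isHermitian_transpose_mul_self Y).eigenvalues j

noncomputable def evec (Y : Matrix (Fin m) (Fin n) ℝ) (j : Fin n) : Fin n → ℝ :=
  ((Matrix.isHermitian_transpose_mul_self Y).eigenvectorBasis j : EuclideanSpace ℝ (Fin n))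

lemma nuclear_eq_sum_ev (Y : Matrix (Fin m) (Fin n) ℝ) :
    nuclearNorm Y = ∑ j, Real.sqrt (ev Y j) := rfl

lemma ev_nonneg (Y : Matrix (Fin m) (Fin n) ℝ) (j : Fin n) : 0 ≤ ev Y j :=
  (Matrix.posSemidef_conjTranspose_mul_self Y).eigenvalues_nonneg j

lemma evec_orth (Y : Matrix (Fin m) (Fin n) ℝ) (j l : Fin n) :
    evec Y j ⬝ᵥ evec Y l = if j = l then (1:ℝ) else 0 := by
  have h := (Matrix.isHermitian_transpose_mul_self Y).eigenvectorBasis.orthonormal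
  rw [orthonormal_iff_ite] at h
  have h2 := h j l
  rw [PiLp.inner_apply] at h2
  simpa [dotProduct, evec, mul_comm] using h2

lemma evec_eig (Y : Matrix (Fin m) (Fin n) ℝ) (j : Fin n) :
    (Yᴴ * Y) *ᵥ evec Y j = ev Y j • evec Y j :=
  (Matrix.isHermitian_transpose_mul_self Y).mulVec_eigenvectorBasis j

lemma dot_Ymul (Y : Matrix (Fin m) (Fin n) ℝ) (x : Fin n → ℝ) :
    (Y *ᵥ x) ⬝ᵥ (Y *ᵥ x) = x ⬝ᵥ ((Yᴴ * Y) *ᵥ x) := by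
  rw [show Yᴴ = Yᵀ from Matrix.conjTranspose_eq_transpose_of_trivial Y]
  rw [← Matrix.mulVec_mulVec, ← mulVec_dot, dotProduct_comm]

lemma dot_Yevec (Y : Matrix (Fin m) (Fin n) ℝ) (j : Fin n) :
    (Y *ᵥ evec Y j) ⬝ᵥ (Y *ᵥ evec Y j) = ev Y j := by
  rw [dot_Ymul, evec_eig, dotProduct_smul, smul_eq_mul, evec_orth]
  simp

lemma dot_Yevec_ne (Y : Matrix (Fin m) (Fin n) ℝ) {j l : Fin n} (hjl : j ≠ l) :
    (Y *ᵥ evec Y j) ⬝ᵥ (Y *ᵥ evec Y l) = 0 := by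
  have : (Y *ᵥ evec Y j) ⬝ᵥ (Y *ᵥ evec Y l) = evec Y j ⬝ᵥ ((Yᴴ * Y) *ᵥ evec Y l) := by
    rw [show Yᴴ = Yᵀ from Matrix.conjTranspose_eq_transpose_of_trivial Y]
    rw [← Matrix.mulVec_mulVec, ← mulVec_dot, dotProduct_comm]
  rw [this, evec_eig, dotProduct_smul, smul_eq_mul, evec_orth]
  simp [hjl]

lemma evec_complete (Y : Matrix (Fin m) (Fin n) ℝ) (p q : Fin n) :
    ∑ j, evec Y j p * evec Y j q = if p = q then (1:ℝ) else 0 := by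
  classical
  set F : Matrix (Fin n) (Fin n) ℝ := fun i j => evec Y j i with hF
  have h1 : Fᵀ * F = 1 := by
    ext j l
    have := evec_orth Y j l
    simp only [Matrix.mul_apply, Matrix.one_apply, Matrix.transpose_apply]
    simpa [Matrix.mul_apply, Matrix.one_apply, hF, dotProduct] using this
  have h2 : F * Fᵀ = 1 := mul_eq_one_comm.mp h1
  have h3 := congrFun (congrFun h2 p) q
  simp only [Matrix.mul_apply, Matrix.one_apply, Matrix.transpose_apply] at h3
  simpa [Matrix.mul_apply, Matrix.one_apply, hF] using h3


lemma sum_mulVec' {ι : Type*} (s : Finset ι) (M : ι → Matrix (Fin m) (Fin n) ℝ) (x : Fin n → ℝ) :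
    (∑ k ∈ s, M k) *ᵥ x = ∑ k ∈ s, M k *ᵥ x := by
  ext i
  simp only [mulVec, dotProduct, Matrix.sum_apply, Finset.sum_apply, Finset.sum_mul]
  exact Finset.sum_comm

lemma dot_sum_left {ι : Type*} (s : Finset ι) (w : ι → Fin m → ℝ) (y : Fin m → ℝ) :
    (∑ k ∈ s, w k) ⬝ᵥ y = ∑ k ∈ s, w k ⬝ᵥ y := by
  simp only [dotProduct, Finset.sum_apply, Finset.sum_mul]
  exact Finset.sum_comm

lemma dot_sum_right {ι : Type*} (s : Finset ι) (y : Fin m → ℝ) (w : ι → Fin m → ℝ) :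
    y ⬝ᵥ (∑ k ∈ s, w k) = ∑ k ∈ s, y ⬝ᵥ w k := by
  simp only [dotProduct, Finset.sum_apply, Finset.mul_sum]
  exact Finset.sum_comm

lemma frob_add_right (Z X Y : Matrix (Fin m) (Fin n) ℝ) :
    frobInner Z (X + Y) = frobInner Z X + frobInner Z Y := by
  simp [frobInner, Matrix.add_apply, mul_add, Finset.sum_add_distrib]

lemma frob_sub_right (Z X Y : Matrix (Fin m) (Fin n) ℝ) :
    frobInner Z (X - Y) = frobInner Z X - frobInner Z Y := by
  simp [frobInner, Matrix.sub_apply, mul_sub, Finset.sum_sub_distrib]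

lemma frob_smul_right (Z : Matrix (Fin m) (Fin n) ℝ) (c : ℝ) (Y : Matrix (Fin m) (Fin n) ℝ) :
    frobInner Z (c • Y) = c * frobInner Z Y := by
  simp [frobInner, Matrix.smul_apply, smul_eq_mul, Finset.mul_sum]
  exact Finset.sum_congr rfl fun i _ => Finset.sum_congr rfl fun j _ => by ring

lemma frob_sum_right {ι : Type*} (s : Finset ι) (Z : Matrix (Fin m) (Fin n) ℝ)
    (M : ι → Matrix (Fin m) (Fin n) ℝ) :
    frobInner Z (∑ k ∈ s, M k) = ∑ k ∈ s, frobInner Z (M k) := by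
  classical
  induction s using Finset.induction_on with
  | empty => simp [frobInner]
  | insert _ _ h ih => rw [Finset.sum_insert h, Finset.sum_insert h, frob_add_right, ih]

lemma frob_comm (Z Y : Matrix (Fin m) (Fin n) ℝ) : frobInner Z Y = frobInner Y Z := by
  simp [frobInner, mul_comm]

lemma frob_vmv (Z : Matrix (Fin m) (Fin n) ℝ) (x : Fin m → ℝ) (y : Fin n → ℝ) :
    frobInner Z (vecMulVec x y) = x ⬝ᵥ (Z *ᵥ y) := by
  simp only [frobInner, vecMulVec_apply, dotProduct, mulVec, Finset.mul_sum]
  exact Finset.sum_congr rfl fun i _ => Finset.sum_congr rfl fun j _ => by ring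

lemma nuclear_nonneg (Y : Matrix (Fin m) (Fin n) ℝ) : 0 ≤ nuclearNorm Y := by
  rw [nuclear_eq_sum_ev]
  exact Finset.sum_nonneg fun j _ => Real.sqrt_nonneg _

lemma frob_le (Z Y : Matrix (Fin m) (Fin n) ℝ) :
    frobInner Z Y ≤ matSpectralNorm Z * nuclearNorm Y := by
  rw [frob_eq_sum_dot (evec_complete Y) Z Y, nuclear_eq_sum_ev, Finset.mul_sum]
  refine Finset.sum_le_sum fun j _ => ?_
  calc (Z *ᵥ evec Y j) ⬝ᵥ (Y *ᵥ evec Y j)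
      ≤ Real.sqrt ((Z *ᵥ evec Y j) ⬝ᵥ (Z *ᵥ evec Y j)) *
        Real.sqrt ((Y *ᵥ evec Y j) ⬝ᵥ (Y *ᵥ evec Y j)) := dot_le _ _
    _ ≤ (matSpectralNorm Z * Real.sqrt (evec Y j ⬝ᵥ evec Y j)) *
        Real.sqrt ((Y *ᵥ evec Y j) ⬝ᵥ (Y *ᵥ evec Y j)) :=
        mul_le_mul_of_nonneg_right (spec_mulVec Z _) (Real.sqrt_nonneg _)
    _ = matSpectralNorm Z * Real.sqrt (ev Y j) := by
        rw [dot_Yevec, evec_orth]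
        simp

lemma nuclearNorm_zero : nuclearNorm (0 : Matrix (Fin m) (Fin n) ℝ) = 0 := by
  rw [nuclear_eq_sum_ev]
  have h : ∀ j, ev (0 : Matrix (Fin m) (Fin n) ℝ) j = 0 := by
    intro j
    have := dot_Yevec (0 : Matrix (Fin m) (Fin n) ℝ) j
    simpa [Matrix.zero_mulVec] using this.symm
  simp [h]

lemma exists_dual (Y : Matrix (Fin m) (Fin n) ℝ) :
    ∃ Z : Matrix (Fin m) (Fin n) ℝ, matSpectralNorm Z ≤ 1 ∧ frobInner Z Y = nuclearNorm Y := by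
  classical
  set g : Fin n → Fin m → ℝ := fun j =>
    if ev Y j = 0 then 0 else (Real.sqrt (ev Y j))⁻¹ • (Y *ᵥ evec Y j) with hg
  have gdot_ne : ∀ {j l : Fin n}, j ≠ l → g j ⬝ᵥ g l = 0 := by
    intro j l hjl
    by_cases h1 : ev Y j = 0 <;> by_cases h2 : ev Y l = 0 <;>
      simp [hg, h1, h2, smul_dotProduct, dotProduct_smul,
        dot_Yevec_ne Y hjl]
  have gdot_self : ∀ j, g j ⬝ᵥ g j = if ev Y j = 0 then 0 else 1 := by
    intro j
    by_cases h1 : ev Y j = 0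
    · simp [hg, h1]
    · have hpos : 0 < ev Y j := lt_of_le_of_ne (ev_nonneg Y j) (Ne.symm h1)
      have hs : Real.sqrt (ev Y j) ≠ 0 := by positivity
      simp only [hg, h1, if_false, smul_dotProduct, dotProduct_smul,
        dot_Yevec Y j, smul_eq_mul]
      field_simp
      rw [Real.sq_sqrt hpos.le]
  refine ⟨∑ j, vecMulVec (g j) (evec Y j), ?_, ?_⟩
  · refine spec_le zero_le_one fun x => ?_
    have hZx : (∑ j, vecMulVec (g j) (evec Y j)) *ᵥ x = ∑ j, (evec Y j ⬝ᵥ x) • g j := by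
      rw [sum_mulVec']
      exact Finset.sum_congr rfl fun j _ => vmv_mulVec _ _ _
    have hdot : ((∑ j, vecMulVec (g j) (evec Y j)) *ᵥ x) ⬝ᵥ
        ((∑ j, vecMulVec (g j) (evec Y j)) *ᵥ x) ≤ x ⬝ᵥ x := by
      rw [hZx, dot_sum_left]
      have hterm : ∀ j, ((evec Y j ⬝ᵥ x) • g j) ⬝ᵥ (∑ l, (evec Y l ⬝ᵥ x) • g l)
          ≤ (evec Y j ⬝ᵥ x) * (evec Y j ⬝ᵥ x) := by
        intro j
        rw [dot_sum_right]
        have : ∀ l, ((evec Y j ⬝ᵥ x) • g j) ⬝ᵥ ((evec Y l ⬝ᵥ x) • g l)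
            = if j = l then (evec Y j ⬝ᵥ x) * (evec Y l ⬝ᵥ x) * (g j ⬝ᵥ g l) else 0 := by
          intro l
          by_cases hjl : j = l
          · subst hjl
            simp [smul_dotProduct, dotProduct_smul, smul_eq_mul]
            ring
          · simp [hjl, smul_dotProduct, dotProduct_smul, gdot_ne hjl]
        rw [Finset.sum_congr rfl fun l _ => this l, Finset.sum_ite_eq Finset.univ j
          (fun l => (evec Y j ⬝ᵥ x) * (evec Y l ⬝ᵥ x) * (g j ⬝ᵥ g l))]
        simp only [Finset.mem_univ, if_true, gdot_self j]
        by_cases h1 : ev Y j = 0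
        · simpa [h1] using mul_self_nonneg (evec Y j ⬝ᵥ x)
        · simp [h1]
      calc ∑ j, ((evec Y j ⬝ᵥ x) • g j) ⬝ᵥ (∑ l, (evec Y l ⬝ᵥ x) • g l)
          ≤ ∑ j, (evec Y j ⬝ᵥ x) * (evec Y j ⬝ᵥ x) := Finset.sum_le_sum fun j _ => hterm j
        _ = x ⬝ᵥ x := parseval (evec_complete Y) x x
    rw [one_mul]
    exact Real.sqrt_le_sqrt hdot
  · rw [frob_comm, frob_sum_right]
    rw [nuclear_eq_sum_ev]
    refine Finset.sum_congr rfl fun j _ => ?_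
    rw [frob_vmv]
    by_cases h1 : ev Y j = 0
    · simp [hg, h1]
    · have hpos : 0 < ev Y j := lt_of_le_of_ne (ev_nonneg Y j) (Ne.symm h1)
      simp only [hg, h1, if_false, smul_dotProduct, smul_eq_mul, dot_Yevec Y j]
      rw [inv_mul_eq_div, Real.div_sqrt]

lemma spec_zero : matSpectralNorm (0 : Matrix (Fin m) (Fin n) ℝ) = 0 := by
  simp [matSpectralNorm]

lemma sq_le_of_sqrt_le {a b : ℝ} (ha : 0 ≤ a) (hb : 0 ≤ b)
    (h : Real.sqrt a ≤ Real.sqrt b) : a ≤ b := by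
  have h2 := mul_le_mul h h (Real.sqrt_nonneg a) (Real.sqrt_nonneg b)
  rwa [Real.mul_self_sqrt ha, Real.mul_self_sqrt hb] at h2

lemma vmv_transpose (x : Fin m → ℝ) (y : Fin n → ℝ) :
    (vecMulVec x y)ᵀ = vecMulVec y x := by
  ext i j; simp [vecMulVec_apply, transpose_apply, mul_comm]

lemma sumvmv_mulVec {a : Fin r → Fin m → ℝ} {w : Fin r → Fin n → ℝ}
    (hw : ∀ k l, w k ⬝ᵥ w l = if k = l then (1:ℝ) else 0) (l : Fin r) :
    (∑ k, vecMulVec (a k) (w k)) *ᵥ w l = a l := by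
  rw [sum_mulVec']
  have h : ∀ k, vecMulVec (a k) (w k) *ᵥ w l = (if k = l then (1:ℝ) else 0) • a k := by
    intro k; rw [vmv_mulVec, hw k l]
  rw [Finset.sum_congr rfl fun k _ => h k]
  simp [ite_smul]

lemma mulVec_sum_vec {ι : Type*} (M : Matrix (Fin m) (Fin n) ℝ) (s : Finset ι)
    (z : ι → Fin n → ℝ) : M *ᵥ (∑ k ∈ s, z k) = ∑ k ∈ s, M *ᵥ z k :=
  map_sum (Matrix.mulVecLin M) z s

lemma dot_orthExpand {a : Fin r → Fin m → ℝ}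
    (ha : ∀ k l, a k ⬝ᵥ a l = if k = l then (1:ℝ) else 0) (c d : Fin r → ℝ) :
    (∑ k, c k • a k) ⬝ᵥ (∑ k, d k • a k) = ∑ k, c k * d k := by
  rw [dot_sum_left]
  refine Finset.sum_congr rfl fun j _ => ?_
  rw [dot_sum_right]
  have h : ∀ l, (c j • a j) ⬝ᵥ (d l • a l) = if j = l then c j * d l else 0 := by
    intro l
    rw [smul_dotProduct, dotProduct_smul, ha j l]
    by_cases hjl : j = l <;> simp [hjl]
  rw [Finset.sum_congr rfl fun l _ => h l]
  simp

lemma perp_dot {v : Fin r → Fin n → ℝ}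
    (hv : ∀ k l, v k ⬝ᵥ v l = if k = l then (1:ℝ) else 0) (x : Fin n → ℝ) (l : Fin r) :
    v l ⬝ᵥ (x - ∑ k, (v k ⬝ᵥ x) • v k) = 0 := by
  rw [dotProduct_sub, dot_sum_right]
  have h : ∀ k, v l ⬝ᵥ ((v k ⬝ᵥ x) • v k) = if l = k then v k ⬝ᵥ x else 0 := by
    intro k
    rw [dotProduct_smul, smul_eq_mul, mul_comm, hv l k]
    by_cases hlk : l = k <;> simp [hlk]
  rw [Finset.sum_congr rfl fun k _ => h k]
  simp

lemma perp_self {v : Fin r → Fin n → ℝ}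
    (hv : ∀ k l, v k ⬝ᵥ v l = if k = l then (1:ℝ) else 0) (x : Fin n → ℝ) :
    (x - ∑ k, (v k ⬝ᵥ x) • v k) ⬝ᵥ (x - ∑ k, (v k ⬝ᵥ x) • v k)
      = x ⬝ᵥ x - ∑ k, (v k ⬝ᵥ x) * (v k ⬝ᵥ x) := by
  have hperp : ∀ l, (x - ∑ k, (v k ⬝ᵥ x) • v k) ⬝ᵥ v l = 0 := fun l => by
    rw [dotProduct_comm]; exact perp_dot hv x l
  have h1 : (x - ∑ k, (v k ⬝ᵥ x) • v k) ⬝ᵥ (x - ∑ k, (v k ⬝ᵥ x) • v k)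
      = (x - ∑ k, (v k ⬝ᵥ x) • v k) ⬝ᵥ x := by
    rw [dotProduct_sub, dot_sum_right]
    have h2 : ∀ k, (x - ∑ k', (v k' ⬝ᵥ x) • v k') ⬝ᵥ ((v k ⬝ᵥ x) • v k) = 0 := fun k => by
      rw [dotProduct_smul, hperp k, smul_zero]
    rw [Finset.sum_congr rfl fun k _ => h2 k]
    simp
  rw [h1, sub_dotProduct, dot_sum_left]
  congr 1
  refine Finset.sum_congr rfl fun k _ => ?_
  rw [smul_dotProduct, smul_eq_mul, dotProduct_comm (v k) x]

lemma mulVec_perp {v : Fin r → Fin n → ℝ} {W : Matrix (Fin m) (Fin n) ℝ}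
    (hWv : ∀ k, W *ᵥ v k = 0) (x : Fin n → ℝ) :
    W *ᵥ (x - ∑ k, (v k ⬝ᵥ x) • v k) = W *ᵥ x := by
  rw [Matrix.mulVec_sub, mulVec_sum_vec]
  have h : ∀ k, W *ᵥ ((v k ⬝ᵥ x) • v k) = 0 := fun k => by
    rw [mulVec_smul, hWv k, smul_zero]
  rw [Finset.sum_congr rfl fun k _ => h k]
  simp

lemma spec_UVW {u : Fin r → Fin m → ℝ} {v : Fin r → Fin n → ℝ}
    (hu : ∀ k l, u k ⬝ᵥ u l = if k = l then (1:ℝ) else 0)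
    (hv : ∀ k l, v k ⬝ᵥ v l = if k = l then (1:ℝ) else 0)
    {W : Matrix (Fin m) (Fin n) ℝ} (hW1 : matSpectralNorm W ≤ 1)
    (hWu : ∀ k, Wᵀ *ᵥ u k = 0) (hWv : ∀ k, W *ᵥ v k = 0) :
    matSpectralNorm ((∑ k, vecMulVec (u k) (v k)) + W) ≤ 1 := by
  refine spec_le zero_le_one fun x => ?_
  rw [one_mul]
  refine Real.sqrt_le_sqrt ?_
  have hUVx : (∑ k, vecMulVec (u k) (v k)) *ᵥ x = ∑ k, (v k ⬝ᵥ x) • u k := by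
    rw [sum_mulVec']
    exact Finset.sum_congr rfl fun k _ => vmv_mulVec _ _ _
  have hUVnorm : ((∑ k, vecMulVec (u k) (v k)) *ᵥ x) ⬝ᵥ ((∑ k, vecMulVec (u k) (v k)) *ᵥ x)
      = ∑ k, (v k ⬝ᵥ x) * (v k ⬝ᵥ x) := by
    rw [hUVx]; exact dot_orthExpand hu _ _
  have hcross : ((∑ k, vecMulVec (u k) (v k)) *ᵥ x) ⬝ᵥ (W *ᵥ x) = 0 := by
    rw [hUVx, dot_sum_left]
    have h : ∀ k, ((v k ⬝ᵥ x) • u k) ⬝ᵥ (W *ᵥ x) = 0 := by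
      intro k
      have e : u k ⬝ᵥ (W *ᵥ x) = 0 := by
        rw [dotProduct_comm, mulVec_dot, hWu k, dotProduct_zero]
      rw [smul_dotProduct, e, smul_zero]
    rw [Finset.sum_congr rfl fun k _ => h k]
    simp
  have hWnorm : (W *ᵥ x) ⬝ᵥ (W *ᵥ x) ≤ x ⬝ᵥ x - ∑ k, (v k ⬝ᵥ x) * (v k ⬝ᵥ x) := by
    rw [← mulVec_perp hWv x, ← perp_self hv x]
    refine sq_le_of_sqrt_le (dot_self_nonneg _) (dot_self_nonneg _) ?_
    calc Real.sqrt ((W *ᵥ (x - ∑ k, (v k ⬝ᵥ x) • v k)) ⬝ᵥ (W *ᵥ (x - ∑ k, (v k ⬝ᵥ x) • v k)))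
        ≤ matSpectralNorm W * Real.sqrt ((x - ∑ k, (v k ⬝ᵥ x) • v k) ⬝ᵥ (x - ∑ k, (v k ⬝ᵥ x) • v k)) :=
          spec_mulVec _ _
      _ ≤ 1 * Real.sqrt ((x - ∑ k, (v k ⬝ᵥ x) • v k) ⬝ᵥ (x - ∑ k, (v k ⬝ᵥ x) • v k)) :=
          mul_le_mul_of_nonneg_right hW1 (Real.sqrt_nonneg _)
      _ = _ := one_mul _
  have expand : (((∑ k, vecMulVec (u k) (v k)) + W) *ᵥ x) ⬝ᵥ (((∑ k, vecMulVec (u k) (v k)) + W) *ᵥ x)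
      = ((∑ k, vecMulVec (u k) (v k)) *ᵥ x) ⬝ᵥ ((∑ k, vecMulVec (u k) (v k)) *ᵥ x)
        + 2 * (((∑ k, vecMulVec (u k) (v k)) *ᵥ x) ⬝ᵥ (W *ᵥ x))
        + (W *ᵥ x) ⬝ᵥ (W *ᵥ x) := by
    rw [Matrix.add_mulVec, dotProduct_add, add_dotProduct, add_dotProduct,
      dotProduct_comm (W *ᵥ x) ((∑ k, vecMulVec (u k) (v k)) *ᵥ x)]
    ring
  rw [expand, hUVnorm, hcross]
  linarith [hWnorm]


end NucAux

open NucAux in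
/-- characterization of the subdifferential of the nuclear norm. If
`A = ∑ k, σ_k u_k v_kᵀ` is a singular value decomposition of a rank-`r` matrix `A`
(`σ_k > 0`, the `u_k` and `v_k` orthonormal), then `φ` is a subgradient of `‖·‖_*` at `A`
iff `φ = ∑ k, u_k v_kᵀ + W` with `‖W‖ ≤ 1`, `Wᵀ u_k = 0` and `W v_k = 0` for all `k`. -/
theorem subdifferential_nuclearNorm
    (m n r : ℕ) (A : Matrix (Fin m) (Fin n) ℝ)
    (σ : Fin r → ℝ) (hσ : ∀ k, 0 < σ k)
    (u : Fin r → Fin m → ℝ) (v : Fin r → Fin n → ℝ)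
    (hu : ∀ k l, u k ⬝ᵥ u l = if k = l then (1 : ℝ) else 0)
    (hv : ∀ k l, v k ⬝ᵥ v l = if k = l then (1 : ℝ) else 0)
    (hA : A = ∑ k, σ k • Matrix.vecMulVec (u k) (v k))
    (hrank : A.rank = r)
    (φ : Matrix (Fin m) (Fin n) ℝ) :
    (∀ Y : Matrix (Fin m) (Fin n) ℝ,
        nuclearNorm Y - nuclearNorm A ≥ frobInner φ (Y - A)) ↔
    ∃ W : Matrix (Fin m) (Fin n) ℝ,
      matSpectralNorm W ≤ 1 ∧
      (∀ k, Wᵀ *ᵥ u k = 0 ∧ W *ᵥ v k = 0) ∧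
      φ = (∑ k, Matrix.vecMulVec (u k) (v k)) + W := by
  classical
  have hUVv : ∀ l, (∑ k, Matrix.vecMulVec (u k) (v k)) *ᵥ v l = u l :=
    fun l => sumvmv_mulVec hv l
  have hUVT : (∑ k, Matrix.vecMulVec (u k) (v k))ᵀ = ∑ k, Matrix.vecMulVec (v k) (u k) := by
    rw [Matrix.transpose_sum]
    exact Finset.sum_congr rfl fun k _ => vmv_transpose _ _
  have hUVTu : ∀ l, (∑ k, Matrix.vecMulVec (u k) (v k))ᵀ *ᵥ u l = v l := by
    intro l; rw [hUVT]; exact sumvmv_mulVec hu l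
  have hfrobA : ∀ Z : Matrix (Fin m) (Fin n) ℝ,
      frobInner Z A = ∑ k, σ k * (u k ⬝ᵥ (Z *ᵥ v k)) := by
    intro Z
    rw [hA, frob_sum_right]
    exact Finset.sum_congr rfl fun k _ => by rw [frob_smul_right, frob_vmv]
  have huu : ∀ k, u k ⬝ᵥ u k = 1 := fun k => by rw [hu k k]; simp
  have hvv : ∀ k, v k ⬝ᵥ v k = 1 := fun k => by rw [hv k k]; simp
  have hdotle1 : ∀ Z : Matrix (Fin m) (Fin n) ℝ, matSpectralNorm Z ≤ 1 →
      ∀ k, u k ⬝ᵥ (Z *ᵥ v k) ≤ 1 := by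
    intro Z hZ k
    have h := dot_mulVec_le Z (u k) (v k)
    rw [huu k, hvv k, Real.sqrt_one, mul_one, mul_one] at h
    exact h.trans hZ
  have hnucA : nuclearNorm A = ∑ k, σ k := by
    have hUVspec : matSpectralNorm (∑ k, Matrix.vecMulVec (u k) (v k)) ≤ 1 := by
      have h := spec_UVW hu hv (W := (0 : Matrix (Fin m) (Fin n) ℝ))
        (by rw [spec_zero]; exact zero_le_one)
        (fun k => by simp) (fun k => by simp)
      simpa using h
    have hle : ∑ k, σ k ≤ nuclearNorm A := by
      have h1 : frobInner (∑ k, Matrix.vecMulVec (u k) (v k)) A = ∑ k, σ k := by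
        rw [hfrobA]
        exact Finset.sum_congr rfl fun k _ => by rw [hUVv k, huu k, mul_one]
      have h2 := frob_le (∑ k, Matrix.vecMulVec (u k) (v k)) A
      nlinarith [nuclear_nonneg A]
    have hge : nuclearNorm A ≤ ∑ k, σ k := by
      obtain ⟨Z, hZ1, hZ2⟩ := exists_dual A
      rw [← hZ2, hfrobA Z]
      refine Finset.sum_le_sum fun k _ => ?_
      calc σ k * (u k ⬝ᵥ (Z *ᵥ v k)) ≤ σ k * 1 :=
            mul_le_mul_of_nonneg_left (hdotle1 Z hZ1 k) (hσ k).le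
        _ = σ k := mul_one _
    linarith
  constructor
  · intro hsub
    have tri : ∀ E, frobInner φ E ≤ nuclearNorm E := by
      intro E
      obtain ⟨Z, hZ1, hZ2⟩ := exists_dual (A + E)
      have h2 : nuclearNorm (A + E) ≤ nuclearNorm A + nuclearNorm E := by
        rw [← hZ2, frob_add_right]
        have h3 := frob_le Z A
        have h4 := frob_le Z E
        nlinarith [nuclear_nonneg A, nuclear_nonneg E]
      have h3 := hsub (A + E)
      rw [add_sub_cancel_left] at h3
      linarith
    have hφxy : ∀ (x : Fin m → ℝ) (y : Fin n → ℝ),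
        x ⬝ᵥ (φ *ᵥ y) ≤ Real.sqrt (x ⬝ᵥ x) * Real.sqrt (y ⬝ᵥ y) := by
      intro x y
      have h1 := tri (Matrix.vecMulVec x y)
      rw [frob_vmv] at h1
      obtain ⟨Z, hZ1, hZ2⟩ := exists_dual (Matrix.vecMulVec x y)
      have h2 : nuclearNorm (Matrix.vecMulVec x y)
          ≤ Real.sqrt (x ⬝ᵥ x) * Real.sqrt (y ⬝ᵥ y) := by
        rw [← hZ2, frob_vmv]
        have h3 := dot_mulVec_le Z x y
        nlinarith [Real.sqrt_nonneg (x ⬝ᵥ x), Real.sqrt_nonneg (y ⬝ᵥ y),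
          mul_nonneg (Real.sqrt_nonneg (x ⬝ᵥ x)) (Real.sqrt_nonneg (y ⬝ᵥ y))]
      linarith
    have hφT : ∀ (y : Fin m → ℝ) (x : Fin n → ℝ),
        x ⬝ᵥ (φᵀ *ᵥ y) ≤ Real.sqrt (x ⬝ᵥ x) * Real.sqrt (y ⬝ᵥ y) := by
      intro y x
      rw [← mulVec_dot, dotProduct_comm, mul_comm]
      exact hφxy y x
    have hφspec : matSpectralNorm φ ≤ 1 := by
      refine spec_le zero_le_one fun x => ?_
      rw [one_mul]
      have h1 := hφxy (φ *ᵥ x) x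
      have h2 := Real.mul_self_sqrt (dot_self_nonneg (φ *ᵥ x))
      nlinarith [Real.sqrt_nonneg ((φ *ᵥ x) ⬝ᵥ (φ *ᵥ x)), Real.sqrt_nonneg (x ⬝ᵥ x)]
    have hfA : frobInner φ A = ∑ k, σ k := by
      have hle : frobInner φ A ≤ ∑ k, σ k := by
        have h1 := frob_le φ A
        rw [hnucA] at h1
        nlinarith [Finset.sum_nonneg fun k (_ : k ∈ Finset.univ) => (hσ k).le]
      have hge : ∑ k, σ k ≤ frobInner φ A := by
        have h0 := hsub 0
        rw [nuclearNorm_zero, frob_sub_right, hnucA] at h0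
        have hz : frobInner φ (0 : Matrix (Fin m) (Fin n) ℝ) = 0 := by simp [frobInner]
        rw [hz] at h0
        linarith
      linarith
    have hc : ∀ k, u k ⬝ᵥ (φ *ᵥ v k) = 1 := by
      have hsum : ∑ k, σ k * (u k ⬝ᵥ (φ *ᵥ v k)) = ∑ k, σ k := by
        rw [← hfrobA φ, hfA]
      have h1 : ∑ k, σ k * (1 - u k ⬝ᵥ (φ *ᵥ v k)) = 0 := by
        simp only [mul_sub, mul_one, Finset.sum_sub_distrib, hsum, sub_self]
      have hnn : ∀ k ∈ Finset.univ, (0:ℝ) ≤ σ k * (1 - u k ⬝ᵥ (φ *ᵥ v k)) := by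
        intro k _
        have := hdotle1 φ hφspec k
        nlinarith [hσ k]
      have h2 := (Finset.sum_eq_zero_iff_of_nonneg hnn).mp h1
      intro k
      have h3 := h2 k (Finset.mem_univ k)
      rcases mul_eq_zero.mp h3 with h | h
      · exact absurd h (hσ k).ne'
      · linarith
    have hsq_le_one : ∀ (w : Fin m → ℝ), w ⬝ᵥ w ≤ Real.sqrt (w ⬝ᵥ w) → w ⬝ᵥ w ≤ 1 := by
      intro w h1
      have h2 := Real.mul_self_sqrt (dot_self_nonneg w)
      nlinarith [Real.sqrt_nonneg (w ⬝ᵥ w), sq_nonneg (Real.sqrt (w ⬝ᵥ w) - 1)]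
    have hφv : ∀ k, φ *ᵥ v k = u k := by
      intro k
      have hw1 : (φ *ᵥ v k) ⬝ᵥ (φ *ᵥ v k) ≤ 1 := by
        have h1 := hφxy (φ *ᵥ v k) (v k)
        rw [hvv k, Real.sqrt_one, mul_one] at h1
        exact hsq_le_one _ h1
      have h3 : (φ *ᵥ v k - u k) ⬝ᵥ (φ *ᵥ v k - u k) = 0 := by
        have e : (φ *ᵥ v k - u k) ⬝ᵥ (φ *ᵥ v k - u k)
            = (φ *ᵥ v k) ⬝ᵥ (φ *ᵥ v k) - 2 * (u k ⬝ᵥ (φ *ᵥ v k)) + u k ⬝ᵥ u k := by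
          rw [sub_dotProduct, dotProduct_sub, dotProduct_sub,
            dotProduct_comm (φ *ᵥ v k) (u k)]
          ring
        apply le_antisymm
        · rw [e, hc k, huu k]; linarith
        · exact dot_self_nonneg _
      have h4 := dotProduct_self_eq_zero.mp h3
      exact sub_eq_zero.mp h4
    have hφTu : ∀ k, φᵀ *ᵥ u k = v k := by
      intro k
      have hwuv : v k ⬝ᵥ (φᵀ *ᵥ u k) = 1 := by
        rw [← mulVec_dot, hφv k, huu k]
      have hw1 : (φᵀ *ᵥ u k) ⬝ᵥ (φᵀ *ᵥ u k) ≤ 1 := by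
        have h1 := hφT (u k) (φᵀ *ᵥ u k)
        rw [huu k, Real.sqrt_one, mul_one] at h1
        have h2 := Real.mul_self_sqrt (dot_self_nonneg (φᵀ *ᵥ u k))
        nlinarith [Real.sqrt_nonneg ((φᵀ *ᵥ u k) ⬝ᵥ (φᵀ *ᵥ u k)),
          sq_nonneg (Real.sqrt ((φᵀ *ᵥ u k) ⬝ᵥ (φᵀ *ᵥ u k)) - 1)]
      have h3 : (φᵀ *ᵥ u k - v k) ⬝ᵥ (φᵀ *ᵥ u k - v k) = 0 := by
        have e : (φᵀ *ᵥ u k - v k) ⬝ᵥ (φᵀ *ᵥ u k - v k)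
            = (φᵀ *ᵥ u k) ⬝ᵥ (φᵀ *ᵥ u k) - 2 * (v k ⬝ᵥ (φᵀ *ᵥ u k)) + v k ⬝ᵥ v k := by
          rw [sub_dotProduct, dotProduct_sub, dotProduct_sub,
            dotProduct_comm (φᵀ *ᵥ u k) (v k)]
          ring
        apply le_antisymm
        · rw [e, hwuv, hvv k]; linarith
        · exact dot_self_nonneg _
      have h4 := dotProduct_self_eq_zero.mp h3
      exact sub_eq_zero.mp h4
    have hWv : ∀ k, (φ - ∑ k, Matrix.vecMulVec (u k) (v k)) *ᵥ v k = 0 := by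
      intro k; rw [Matrix.sub_mulVec, hφv k, hUVv k, sub_self]
    refine ⟨φ - ∑ k, Matrix.vecMulVec (u k) (v k), ?_, ?_, ?_⟩
    · refine spec_le zero_le_one fun x => ?_
      rw [one_mul]
      have hstep : (φ - ∑ k, Matrix.vecMulVec (u k) (v k)) *ᵥ x
          = φ *ᵥ (x - ∑ k, (v k ⬝ᵥ x) • v k) := by
        rw [← mulVec_perp hWv x, Matrix.sub_mulVec]
        have hUVxp : (∑ k, Matrix.vecMulVec (u k) (v k)) *ᵥ (x - ∑ k, (v k ⬝ᵥ x) • v k)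
            = 0 := by
          rw [sum_mulVec']
          have h : ∀ k, Matrix.vecMulVec (u k) (v k) *ᵥ (x - ∑ k, (v k ⬝ᵥ x) • v k) = 0 :=
            fun k => by rw [vmv_mulVec, perp_dot hv x k, zero_smul]
          rw [Finset.sum_congr rfl fun k _ => h k]
          simp
        rw [hUVxp, sub_zero]
      rw [hstep]
      calc Real.sqrt ((φ *ᵥ (x - ∑ k, (v k ⬝ᵥ x) • v k)) ⬝ᵥ (φ *ᵥ (x - ∑ k, (v k ⬝ᵥ x) • v k)))
          ≤ matSpectralNorm φ *
            Real.sqrt ((x - ∑ k, (v k ⬝ᵥ x) • v k) ⬝ᵥ (x - ∑ k, (v k ⬝ᵥ x) • v k)) :=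
            spec_mulVec _ _
        _ ≤ 1 * Real.sqrt ((x - ∑ k, (v k ⬝ᵥ x) • v k) ⬝ᵥ (x - ∑ k, (v k ⬝ᵥ x) • v k)) :=
            mul_le_mul_of_nonneg_right hφspec (Real.sqrt_nonneg _)
        _ = Real.sqrt ((x - ∑ k, (v k ⬝ᵥ x) • v k) ⬝ᵥ (x - ∑ k, (v k ⬝ᵥ x) • v k)) :=
            one_mul _
        _ ≤ Real.sqrt (x ⬝ᵥ x) := by
            refine Real.sqrt_le_sqrt ?_
            rw [perp_self hv x]
            have h : 0 ≤ ∑ k, (v k ⬝ᵥ x) * (v k ⬝ᵥ x) :=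
              Finset.sum_nonneg fun k _ => mul_self_nonneg _
            linarith
    · intro k
      refine ⟨?_, hWv k⟩
      rw [Matrix.transpose_sub, Matrix.sub_mulVec, hφTu k, hUVTu k, sub_self]
    · abel
  · rintro ⟨W, hW1, hWc, hφeq⟩
    subst hφeq
    intro Y
    have hfA2 : frobInner ((∑ k, Matrix.vecMulVec (u k) (v k)) + W) A = ∑ k, σ k := by
      rw [hfrobA]
      refine Finset.sum_congr rfl fun k _ => ?_
      rw [Matrix.add_mulVec, hUVv k, (hWc k).2, add_zero, huu k, mul_one]
    have hspec := spec_UVW hu hv hW1 (fun k => (hWc k).1) (fun k => (hWc k).2)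
    have h1 := frob_le ((∑ k, Matrix.vecMulVec (u k) (v k)) + W) Y
    rw [ge_iff_le, frob_sub_right, hfA2, hnucA]
    nlinarith [nuclear_nonneg Y]
end

section
/- Let ū ∈ R^M be the characteristic vector of a nonempty U* ⊆ {1,…,M} and v̄ ∈ R^N the characteristic vector of a nonempty V* ⊆ {1,…,N}. Define the following subsets of R^{M×N}: S₁ = { Z : ūᵀ Z = 0 and Z v̄ = 0 }; S₂ = { x v̄ᵀ : x ∈ R^M with x_i = 0 for all i ∈ U* }; S₃ = { ū yᵀ : y ∈ R^N with y_j = 0 for all j ∈ V* }; S₄ = { ū yᵀ + x v̄ᵀ : x ∈ R^M nonzero only on entries indexed by U*, y ∈ R^N nonzero only on entries indexed by V*, and the sum of all entries of ū yᵀ + x v̄ᵀ is zero }; S₅ = { α ū v̄ᵀ : α ∈ R }. Then S₁, …, S₅ are linear subspaces that are mutually orthogonal with respect to the Frobenius inner product, and their direct sum is all of R^{M×N}. -/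
set_option linter.unusedSectionVars false
set_option maxHeartbeats 1000000


open Matrix

/-- The characteristic vector of a finite set of indices. -/
def charVec {ι : Type*} [DecidableEq ι] (S : Finset ι) : ι → ℝ :=
  fun i => if i ∈ S then 1 else 0

/-- `S₁ = { Z : ūᵀ Z = 0 and Z v̄ = 0 }`. -/
def S1 {M N : ℕ} (Ustar : Finset (Fin M)) (Vstar : Finset (Fin N)) :
    Set (Matrix (Fin M) (Fin N) ℝ) :=
  {Z | charVec Ustar ᵥ* Z = 0 ∧ Z *ᵥ charVec Vstar = 0}

/-- `S₂ = { x v̄ᵀ : x vanishes on U* }`. -/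
def S2 {M N : ℕ} (Ustar : Finset (Fin M)) (Vstar : Finset (Fin N)) :
    Set (Matrix (Fin M) (Fin N) ℝ) :=
  {Z | ∃ x : Fin M → ℝ, (∀ i ∈ Ustar, x i = 0) ∧ Z = vecMulVec x (charVec Vstar)}

/-- `S₃ = { ū yᵀ : y vanishes on V* }`. -/
def S3 {M N : ℕ} (Ustar : Finset (Fin M)) (Vstar : Finset (Fin N)) :
    Set (Matrix (Fin M) (Fin N) ℝ) :=
  {Z | ∃ y : Fin N → ℝ, (∀ j ∈ Vstar, y j = 0) ∧ Z = vecMulVec (charVec Ustar) y}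

/-- `S₄ = { ū yᵀ + x v̄ᵀ : x supported on U*, y supported on V*, entries summing to 0 }`. -/
def S4 {M N : ℕ} (Ustar : Finset (Fin M)) (Vstar : Finset (Fin N)) :
    Set (Matrix (Fin M) (Fin N) ℝ) :=
  {Z | ∃ (x : Fin M → ℝ) (y : Fin N → ℝ),
    (∀ i ∉ Ustar, x i = 0) ∧ (∀ j ∉ Vstar, y j = 0) ∧
    Z = vecMulVec (charVec Ustar) y + vecMulVec x (charVec Vstar) ∧
    (∑ i, ∑ j, Z i j) = 0}

/-- `S₅ = { α ū v̄ᵀ : α ∈ ℝ }`. -/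
def S5 {M N : ℕ} (Ustar : Finset (Fin M)) (Vstar : Finset (Fin N)) :
    Set (Matrix (Fin M) (Fin N) ℝ) :=
  {Z | ∃ α : ℝ, Z = α • vecMulVec (charVec Ustar) (charVec Vstar)}

section helpers
variable {m n : Type*} [Fintype m] [Fintype n] [DecidableEq m] [DecidableEq n]

lemma frob_comm (A B : Matrix m n ℝ) : frobInner A B = frobInner B A := by
  simp [frobInner, mul_comm]

lemma frob_add_left (A B C : Matrix m n ℝ) :
    frobInner (A + B) C = frobInner A C + frobInner B C := by
  simp [frobInner, add_mul, Finset.sum_add_distrib]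

lemma frob_add_right (A B C : Matrix m n ℝ) :
    frobInner A (B + C) = frobInner A B + frobInner A C := by
  simp [frobInner, mul_add, Finset.sum_add_distrib]

lemma frob_zero_right (A : Matrix m n ℝ) : frobInner A 0 = 0 := by
  simp [frobInner]

lemma frob_self_eq_zero {A : Matrix m n ℝ} (h : frobInner A A = 0) : A = 0 := by
  ext i j
  have h1 : ∀ i ∈ (Finset.univ : Finset m), (0:ℝ) ≤ ∑ j, A i j * A i j :=
    fun i _ => Finset.sum_nonneg fun j _ => mul_self_nonneg _
  have h2 := (Finset.sum_eq_zero_iff_of_nonneg h1).mp h i (Finset.mem_univ i)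
  have h3 := (Finset.sum_eq_zero_iff_of_nonneg
    (fun j _ => mul_self_nonneg (A i j))).mp h2 j (Finset.mem_univ j)
  have := mul_self_eq_zero.mp h3
  simpa using this

lemma frob_vecMulVec_right (A : Matrix m n ℝ) (c : m → ℝ) (d : n → ℝ) :
    frobInner A (vecMulVec c d) = ∑ i, c i * (A *ᵥ d) i := by
  simp only [frobInner, vecMulVec_apply, mulVec, dotProduct, Finset.mul_sum]
  refine Finset.sum_congr rfl fun i _ => Finset.sum_congr rfl fun j _ => by ring

lemma frob_vecMulVec_right' (A : Matrix m n ℝ) (c : m → ℝ) (d : n → ℝ) :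
    frobInner A (vecMulVec c d) = ∑ j, (c ᵥ* A) j * d j := by
  rw [frob_vecMulVec_right]
  simp only [mulVec, vecMul, dotProduct, Finset.mul_sum, Finset.sum_mul]
  rw [Finset.sum_comm]
  refine Finset.sum_congr rfl fun i _ => Finset.sum_congr rfl fun j _ => by ring

lemma frob_vmv_vmv (a c : m → ℝ) (b d : n → ℝ) :
    frobInner (vecMulVec a b) (vecMulVec c d) = (∑ i, a i * c i) * (∑ j, b j * d j) := by
  simp only [frobInner, vecMulVec_apply, Finset.sum_mul, Finset.mul_sum]
  rw [Finset.sum_comm]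
  refine Finset.sum_congr rfl fun j _ => Finset.sum_congr rfl fun i _ => by ring

lemma sum_charVec_mul (S : Finset m) (x : m → ℝ) :
    ∑ i, charVec S i * x i = ∑ i ∈ S, x i := by
  have : ∀ i, charVec S i * x i = if i ∈ S then x i else 0 := by
    intro i; by_cases hi : i ∈ S <;> simp [charVec, hi]
  simp only [this, Finset.sum_ite_mem, Finset.univ_inter]

lemma sum_mul_charVec (S : Finset m) (x : m → ℝ) :
    ∑ i, x i * charVec S i = ∑ i ∈ S, x i := by
  rw [← sum_charVec_mul S x]
  exact Finset.sum_congr rfl fun i _ => mul_comm _ _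

lemma sum_vanish {S : Finset m} {x : m → ℝ} (h : ∀ i ∈ S, x i = 0) :
    ∑ i ∈ S, x i = 0 := Finset.sum_eq_zero h

lemma sum_support {S : Finset m} {x : m → ℝ} (h : ∀ i ∉ S, x i = 0) :
    ∑ i ∈ S, x i = ∑ i, x i :=
  Finset.sum_subset (Finset.subset_univ S) (fun i _ hi => h i hi)

lemma dot_vanish_support {S : Finset m} {x x' : m → ℝ}
    (h : ∀ i ∈ S, x i = 0) (h' : ∀ i ∉ S, x' i = 0) :
    ∑ i, x i * x' i = 0 := by
  refine Finset.sum_eq_zero fun i _ => ?_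
  by_cases hi : i ∈ S
  · simp [h i hi]
  · simp [h' i hi]

lemma vecMulVec_mulVec_apply (x : m → ℝ) (y : n → ℝ) (d : n → ℝ) (i : m) :
    (vecMulVec x y *ᵥ d) i = x i * ∑ j, y j * d j := by
  simp [mulVec, vecMulVec_apply, dotProduct, Finset.mul_sum, mul_assoc]

lemma vecMul_vecMulVec_apply (x : m → ℝ) (y : n → ℝ) (c : m → ℝ) (j : n) :
    (c ᵥ* vecMulVec x y) j = (∑ i, c i * x i) * y j := by
  simp only [vecMul, vecMulVec_apply, dotProduct, Finset.sum_mul]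
  refine Finset.sum_congr rfl fun i _ => by ring

lemma charVec_dot_charVec (S : Finset m) :
    ∑ i, charVec S i * charVec S i = (S.card : ℝ) := by
  rw [sum_charVec_mul]; simp [charVec]

lemma sum_entries_vecMulVec (x : m → ℝ) (y : n → ℝ) :
    ∑ i, ∑ j, vecMulVec x y i j = (∑ i, x i) * (∑ j, y j) := by
  simp [vecMulVec_apply, ← Finset.mul_sum, ← Finset.sum_mul]

end helpers

section subm
variable {M N : ℕ} (Ustar : Finset (Fin M)) (Vstar : Finset (Fin N))

lemma vecMulVec_add_right (x : Fin M → ℝ) (y y' : Fin N → ℝ) :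
    vecMulVec x (y + y') = vecMulVec x y + vecMulVec x y' := by
  ext i j; simp [vecMulVec_apply, mul_add]

lemma vecMulVec_add_left (x x' : Fin M → ℝ) (y : Fin N → ℝ) :
    vecMulVec (x + x') y = vecMulVec x y + vecMulVec x' y := by
  ext i j; simp [vecMulVec_apply, add_mul]

lemma vecMulVec_smul_left (c : ℝ) (x : Fin M → ℝ) (y : Fin N → ℝ) :
    vecMulVec (c • x) y = c • vecMulVec x y := by
  ext i j; simp [vecMulVec_apply, mul_assoc]

lemma vecMulVec_smul_right (c : ℝ) (x : Fin M → ℝ) (y : Fin N → ℝ) :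
    vecMulVec x (c • y) = c • vecMulVec x y := by
  ext i j; simp [vecMulVec_apply]; ring

def S1sub : Submodule ℝ (Matrix (Fin M) (Fin N) ℝ) where
  carrier := S1 Ustar Vstar
  add_mem' := by
    rintro A B ⟨hA1, hA2⟩ ⟨hB1, hB2⟩
    exact ⟨by rw [vecMul_add, hA1, hB1, add_zero], by rw [add_mulVec, hA2, hB2, add_zero]⟩
  zero_mem' := ⟨by simp, by simp⟩
  smul_mem' := by
    rintro c A ⟨hA1, hA2⟩
    refine ⟨?_, ?_⟩
    · ext j
      have h := congrFun hA1 j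
      simp only [Matrix.vecMul, dotProduct, Pi.zero_apply] at h ⊢
      simp only [Matrix.smul_apply, smul_eq_mul, mul_left_comm, ← Finset.mul_sum, h, mul_zero]
    · rw [smul_mulVec, hA2, smul_zero]

def S2sub : Submodule ℝ (Matrix (Fin M) (Fin N) ℝ) where
  carrier := S2 Ustar Vstar
  add_mem' := by
    rintro A B ⟨x, hx, rfl⟩ ⟨x', hx', rfl⟩
    exact ⟨x + x', fun i hi => by simp [hx i hi, hx' i hi],
      (vecMulVec_add_left x x' _).symm⟩
  zero_mem' := ⟨0, fun i _ => rfl, by ext i j; simp [vecMulVec_apply]⟩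
  smul_mem' := by
    rintro c A ⟨x, hx, rfl⟩
    exact ⟨c • x, fun i hi => by simp [hx i hi], (vecMulVec_smul_left c x _).symm⟩

def S3sub : Submodule ℝ (Matrix (Fin M) (Fin N) ℝ) where
  carrier := S3 Ustar Vstar
  add_mem' := by
    rintro A B ⟨y, hy, rfl⟩ ⟨y', hy', rfl⟩
    exact ⟨y + y', fun j hj => by simp [hy j hj, hy' j hj],
      (vecMulVec_add_right _ y y').symm⟩
  zero_mem' := ⟨0, fun j _ => rfl, by ext i j; simp [vecMulVec_apply]⟩
  smul_mem' := by
    rintro c A ⟨y, hy, rfl⟩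
    exact ⟨c • y, fun j hj => by simp [hy j hj], (vecMulVec_smul_right c _ y).symm⟩

def S4sub : Submodule ℝ (Matrix (Fin M) (Fin N) ℝ) where
  carrier := S4 Ustar Vstar
  add_mem' := by
    rintro A B ⟨x, y, hx, hy, hrep, hsum⟩ ⟨x', y', hx', hy', hrep', hsum'⟩
    refine ⟨x + x', y + y', fun i hi => by simp [hx i hi, hx' i hi],
      fun j hj => by simp [hy j hj, hy' j hj], ?_, ?_⟩
    · rw [vecMulVec_add_right, vecMulVec_add_left, hrep, hrep']; abel
    · simp only [Matrix.add_apply, Finset.sum_add_distrib, hsum, hsum', add_zero]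
  zero_mem' := ⟨0, 0, fun i _ => rfl, fun j _ => rfl,
    by ext i j; simp [vecMulVec_apply], by simp⟩
  smul_mem' := by
    rintro c A ⟨x, y, hx, hy, hrep, hsum⟩
    refine ⟨c • x, c • y, fun i hi => by simp [hx i hi],
      fun j hj => by simp [hy j hj], ?_, ?_⟩
    · rw [vecMulVec_smul_right, vecMulVec_smul_left, hrep, smul_add]
    · simp only [Matrix.smul_apply, smul_eq_mul, ← Finset.mul_sum, hsum, mul_zero]

def S5sub : Submodule ℝ (Matrix (Fin M) (Fin N) ℝ) where
  carrier := S5 Ustar Vstar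
  add_mem' := by
    rintro A B ⟨α, rfl⟩ ⟨β, rfl⟩
    exact ⟨α + β, by rw [add_smul]⟩
  zero_mem' := ⟨0, by rw [zero_smul]⟩
  smul_mem' := by
    rintro c A ⟨α, rfl⟩
    exact ⟨c * α, (smul_smul c α _)⟩

end subm

section orth
variable {M N : ℕ} {Ustar : Finset (Fin M)} {Vstar : Finset (Fin N)}
variable {A B : Matrix (Fin M) (Fin N) ℝ}

lemma frob_smul_right (c : ℝ) (A B : Matrix (Fin M) (Fin N) ℝ) :
    frobInner A (c • B) = c * frobInner A B := by
  simp [frobInner, Finset.mul_sum, Matrix.smul_apply]; ring_nf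
  exact Finset.sum_congr rfl fun i _ => Finset.sum_congr rfl fun j _ => by ring

lemma orth12 (hA : A ∈ S1 Ustar Vstar) (hB : B ∈ S2 Ustar Vstar) : frobInner A B = 0 := by
  obtain ⟨x, _, rfl⟩ := hB
  rw [frob_vecMulVec_right, show A *ᵥ charVec Vstar = 0 from hA.2]
  simp

lemma orth13 (hA : A ∈ S1 Ustar Vstar) (hB : B ∈ S3 Ustar Vstar) : frobInner A B = 0 := by
  obtain ⟨y, _, rfl⟩ := hB
  rw [frob_vecMulVec_right', show charVec Ustar ᵥ* A = 0 from hA.1]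
  simp

lemma orth14 (hA : A ∈ S1 Ustar Vstar) (hB : B ∈ S4 Ustar Vstar) : frobInner A B = 0 := by
  obtain ⟨x, y, _, _, rfl, _⟩ := hB
  rw [frob_add_right, frob_vecMulVec_right', frob_vecMulVec_right,
    show charVec Ustar ᵥ* A = 0 from hA.1, show A *ᵥ charVec Vstar = 0 from hA.2]
  simp

lemma orth15 (hA : A ∈ S1 Ustar Vstar) (hB : B ∈ S5 Ustar Vstar) : frobInner A B = 0 := by
  obtain ⟨α, rfl⟩ := hB
  rw [frob_smul_right, frob_vecMulVec_right', show charVec Ustar ᵥ* A = 0 from hA.1]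
  simp

lemma orth23 (hA : A ∈ S2 Ustar Vstar) (hB : B ∈ S3 Ustar Vstar) : frobInner A B = 0 := by
  obtain ⟨x, hx, rfl⟩ := hA
  obtain ⟨y, _, rfl⟩ := hB
  rw [frob_vmv_vmv, sum_mul_charVec, sum_vanish hx, zero_mul]

lemma orth24 (hA : A ∈ S2 Ustar Vstar) (hB : B ∈ S4 Ustar Vstar) : frobInner A B = 0 := by
  obtain ⟨x, hx, rfl⟩ := hA
  obtain ⟨x', y', hx', _, rfl, _⟩ := hB
  rw [frob_add_right, frob_vmv_vmv, frob_vmv_vmv, sum_mul_charVec, sum_vanish hx,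
    dot_vanish_support hx hx']
  ring

lemma orth25 (hA : A ∈ S2 Ustar Vstar) (hB : B ∈ S5 Ustar Vstar) : frobInner A B = 0 := by
  obtain ⟨x, hx, rfl⟩ := hA
  obtain ⟨α, rfl⟩ := hB
  rw [frob_smul_right, frob_vmv_vmv, sum_mul_charVec, sum_vanish hx]
  ring

lemma orth34 (hA : A ∈ S3 Ustar Vstar) (hB : B ∈ S4 Ustar Vstar) : frobInner A B = 0 := by
  obtain ⟨y, hy, rfl⟩ := hA
  obtain ⟨x', y', _, hy', rfl, _⟩ := hB
  rw [frob_add_right, frob_vmv_vmv, frob_vmv_vmv,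
    show (∑ j, y j * y' j) = 0 from dot_vanish_support hy hy',
    sum_mul_charVec Vstar y, sum_vanish hy]
  ring

lemma orth35 (hA : A ∈ S3 Ustar Vstar) (hB : B ∈ S5 Ustar Vstar) : frobInner A B = 0 := by
  obtain ⟨y, hy, rfl⟩ := hA
  obtain ⟨α, rfl⟩ := hB
  rw [frob_smul_right, frob_vmv_vmv, sum_mul_charVec Vstar y, sum_vanish hy]
  ring

lemma orth45 (hA : A ∈ S4 Ustar Vstar) (hB : B ∈ S5 Ustar Vstar) : frobInner A B = 0 := by
  obtain ⟨x, y, hx, hy, hrep, hsum⟩ := hA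
  obtain ⟨α, rfl⟩ := hB
  rw [hrep] at hsum ⊢
  rw [frob_smul_right, frob_add_left, frob_vmv_vmv, frob_vmv_vmv]
  have hs : (∑ i, ∑ j, (vecMulVec (charVec Ustar) y + vecMulVec x (charVec Vstar)) i j)
      = (∑ i, charVec Ustar i * charVec Ustar i) * (∑ j, y j * charVec Vstar j)
        + (∑ i, x i * charVec Ustar i) * (∑ j, charVec Vstar j * charVec Vstar j) := by
    simp only [Matrix.add_apply, Finset.sum_add_distrib, sum_entries_vecMulVec]
    congr 1
    · rw [charVec_dot_charVec, sum_mul_charVec, sum_support hy]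
      simp [charVec]
    · rw [sum_mul_charVec, sum_support hx, charVec_dot_charVec]
      simp [charVec, mul_comm]
  rw [hs] at hsum
  rw [hsum, mul_zero]

end orth

section exist
variable {M N : ℕ}

lemma decomp_exists (Ustar : Finset (Fin M)) (Vstar : Finset (Fin N))
    (hU : Ustar.Nonempty) (hV : Vstar.Nonempty) (Z : Matrix (Fin M) (Fin N) ℝ) :
    ∃ Z1 Z2 Z3 Z4 Z5 : Matrix (Fin M) (Fin N) ℝ,
      Z1 ∈ S1 Ustar Vstar ∧ Z2 ∈ S2 Ustar Vstar ∧ Z3 ∈ S3 Ustar Vstar ∧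
      Z4 ∈ S4 Ustar Vstar ∧ Z5 ∈ S5 Ustar Vstar ∧ Z = Z1 + Z2 + Z3 + Z4 + Z5 := by
  classical
  set u : Fin M → ℝ := charVec Ustar with hu
  set v : Fin N → ℝ := charVec Vstar with hv
  have hm : ((Ustar.card : ℝ)) ≠ 0 :=
    Nat.cast_ne_zero.mpr (Finset.card_pos.mpr hU).ne'
  have hn : ((Vstar.card : ℝ)) ≠ 0 :=
    Nat.cast_ne_zero.mpr (Finset.card_pos.mpr hV).ne'
  set m : ℝ := (Ustar.card : ℝ)
  set n : ℝ := (Vstar.card : ℝ)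
  set a : Fin M → ℝ := Z *ᵥ v with ha
  set b : Fin N → ℝ := u ᵥ* Z with hb
  set s : ℝ := ∑ i ∈ Ustar, a i with hs
  -- key identity: ∑_{V*} b = s
  have hsb : ∑ j ∈ Vstar, b j = s := by
    have h := dotProduct_mulVec u Z v
    simp only [dotProduct, ← ha, ← hb] at h
    rw [sum_charVec_mul Ustar a] at h
    rw [← sum_mul_charVec Vstar b, ← h, hs]
  set x2 : Fin M → ℝ := fun i => if i ∈ Ustar then 0 else a i / n with hx2
  set y3 : Fin N → ℝ := fun j => if j ∈ Vstar then 0 else b j / m with hy3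
  set x4 : Fin M → ℝ := fun i => if i ∈ Ustar then a i / n - s / (m * n) else 0 with hx4
  set y4 : Fin N → ℝ := fun j => if j ∈ Vstar then b j / m - s / (m * n) else 0 with hy4
  set c5 : Fin M → ℝ := fun i => s / (m * n) * u i with hc5
  set Z2 := vecMulVec x2 v with hZ2
  set Z3 := vecMulVec u y3 with hZ3
  set Z4 := vecMulVec u y4 + vecMulVec x4 v with hZ4
  set Z5 := vecMulVec c5 v with hZ5
  set Z1 := Z - Z2 - Z3 - Z4 - Z5 with hZ1
  -- support/vanishing sums
  have hUx4 : ∑ i ∈ Ustar, x4 i = 0 := by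
    have : ∀ i ∈ Ustar, x4 i = a i / n - s / (m * n) := fun i hi => by simp [hx4, hi]
    rw [Finset.sum_congr rfl this, Finset.sum_sub_distrib, Finset.sum_const,
      ← Finset.sum_div, ← hs]
    field_simp
    rw [nsmul_eq_mul]; change s - n * (m * (s / (n * m))) = n * 0
    rw [show n * (m * (s / (n * m))) = s by field_simp]; ring
  have hVy4 : ∑ j ∈ Vstar, y4 j = 0 := by
    have : ∀ j ∈ Vstar, y4 j = b j / m - s / (m * n) := fun j hj => by simp [hy4, hj]
    rw [Finset.sum_congr rfl this, Finset.sum_sub_distrib, Finset.sum_const,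
      ← Finset.sum_div, hsb]
    field_simp
    rw [nsmul_eq_mul]; change s - m * (n * (s / (m * n))) = m * 0
    rw [show m * (n * (s / (m * n))) = s by field_simp]; ring
  have hux2 : ∑ i, u i * x2 i = 0 := by
    rw [hu, sum_charVec_mul]
    exact Finset.sum_eq_zero fun i hi => by simp [hx2, hi]
  have hvy3 : ∑ j, y3 j * v j = 0 := by
    rw [hv, sum_mul_charVec]
    exact Finset.sum_eq_zero fun j hj => by simp [hy3, hj]
  have hux4 : ∑ i, u i * x4 i = 0 := by
    rw [hu, sum_charVec_mul]; exact hUx4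
  have hvy4 : ∑ j, y4 j * v j = 0 := by
    rw [hv, sum_mul_charVec]; exact hVy4
  have huu : ∑ i, u i * u i = m := by rw [hu]; exact charVec_dot_charVec Ustar
  have hvv : ∑ j, v j * v j = n := by rw [hv]; exact charVec_dot_charVec Vstar
  refine ⟨Z1, Z2, Z3, Z4, Z5, ⟨?_, ?_⟩, ⟨x2, fun i hi => by simp [hx2, hi], rfl⟩,
    ⟨y3, fun j hj => by simp [hy3, hj], rfl⟩,
    ⟨x4, y4, fun i hi => by simp [hx4, hi], fun j hj => by simp [hy4, hj], rfl, ?_⟩,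
    ⟨s / (m * n), by ext i j; simp [hZ5, hc5, vecMulVec_apply, Matrix.smul_apply]; ring⟩,
    by rw [hZ1]; abel⟩
  · -- u ᵥ* Z1 = 0
    have hc5u : ∑ i, u i * c5 i = s / n := by
      have h0 : ∀ i ∈ Finset.univ, u i * c5 i = s / (m * n) * (u i * u i) :=
        fun i _ => by simp only [hc5]; ring
      rw [Finset.sum_congr rfl h0, ← Finset.mul_sum, huu]
      field_simp
    funext j
    have e : (u ᵥ* Z1) j = b j - (u ᵥ* Z2) j - (u ᵥ* Z3) j - (u ᵥ* Z4) j - (u ᵥ* Z5) j := by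
      rw [hZ1]
      simp [Matrix.vecMul_sub, hb]
    rw [e, hZ2, hZ3, hZ4, hZ5, Matrix.vecMul_add]
    simp only [Pi.add_apply, vecMul_vecMulVec_apply]
    rw [hux2, huu, hux4, hc5u]
    by_cases hj : j ∈ Vstar
    · have hvj : v j = 1 := by simp [hv, charVec, hj]
      have hy3j : y3 j = 0 := by simp [hy3, hj]
      have hy4j : y4 j = b j / m - s / (m * n) := by simp [hy4, hj]
      rw [hvj, hy3j, hy4j]
      simp only [Pi.zero_apply]
      field_simp
      ring
    · have hvj : v j = 0 := by simp [hv, charVec, hj]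
      have hy3j : y3 j = b j / m := by simp [hy3, hj]
      have hy4j : y4 j = 0 := by simp [hy4, hj]
      rw [hvj, hy3j, hy4j]
      simp only [Pi.zero_apply]
      field_simp
      ring
  · -- Z1 *ᵥ v = 0
    have hc5i : ∀ i, c5 i * n = s / (m * n) * u i * n := fun i => by simp [hc5]
    funext i
    have e : (Z1 *ᵥ v) i = a i - (Z2 *ᵥ v) i - (Z3 *ᵥ v) i - (Z4 *ᵥ v) i - (Z5 *ᵥ v) i := by
      rw [hZ1]
      simp [Matrix.sub_mulVec, ha]
    rw [e, hZ2, hZ3, hZ4, hZ5, Matrix.add_mulVec]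
    simp only [Pi.add_apply, vecMulVec_mulVec_apply]
    rw [hvv, hvy3, hvy4]
    by_cases hi : i ∈ Ustar
    · have hui : u i = 1 := by simp [hu, charVec, hi]
      have hx2i : x2 i = 0 := by simp [hx2, hi]
      have hx4i : x4 i = a i / n - s / (m * n) := by simp [hx4, hi]
      rw [hui, hx2i, hx4i, hc5i]
      simp only [Pi.zero_apply, hui]
      field_simp
      ring
    · have hui : u i = 0 := by simp [hu, charVec, hi]
      have hx2i : x2 i = a i / n := by simp [hx2, hi]
      have hx4i : x4 i = 0 := by simp [hx4, hi]
      rw [hui, hx2i, hx4i, hc5i]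
      simp only [Pi.zero_apply, hui]
      field_simp
      ring
  · -- sum of entries of Z4 is zero
    rw [hZ4]
    simp only [Matrix.add_apply, Finset.sum_add_distrib, sum_entries_vecMulVec]
    have h1 : ∑ j, y4 j = 0 := by
      rw [← hVy4]
      exact (sum_support fun j hj => by simp [hy4, hj]).symm
    have h2 : ∑ i, x4 i = 0 := by
      rw [← hUx4]
      exact (sum_support fun i hi => by simp [hx4, hi]).symm
    rw [h1, h2, mul_zero, zero_mul, add_zero]
end exist


/-- `S₁, …, S₅` are linear subspaces of `R^{M×N}`, mutually orthogonal with
respect to the Frobenius inner product, and every matrix decomposes uniquely as a sum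
`Z₁ + Z₂ + Z₃ + Z₄ + Z₅` with `Zᵢ ∈ Sᵢ` (i.e., their direct sum is all of `R^{M×N}`). -/
theorem subspace_decomposition
    (M N : ℕ) (Ustar : Finset (Fin M)) (Vstar : Finset (Fin N))
    (hU : Ustar.Nonempty) (hV : Vstar.Nonempty) :
    (∀ S ∈ ({S1 Ustar Vstar, S2 Ustar Vstar, S3 Ustar Vstar, S4 Ustar Vstar,
              S5 Ustar Vstar} : Set (Set (Matrix (Fin M) (Fin N) ℝ))),
      ∃ T : Submodule ℝ (Matrix (Fin M) (Fin N) ℝ), (T : Set (Matrix (Fin M) (Fin N) ℝ)) = S) ∧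
    (∀ i j : Fin 5, i ≠ j →
      ∀ Z₁ ∈ ![S1 Ustar Vstar, S2 Ustar Vstar, S3 Ustar Vstar, S4 Ustar Vstar,
               S5 Ustar Vstar] i,
      ∀ Z₂ ∈ ![S1 Ustar Vstar, S2 Ustar Vstar, S3 Ustar Vstar, S4 Ustar Vstar,
               S5 Ustar Vstar] j,
        frobInner Z₁ Z₂ = 0) ∧
    (∀ Z : Matrix (Fin M) (Fin N) ℝ,
      ∃! q : Matrix (Fin M) (Fin N) ℝ × Matrix (Fin M) (Fin N) ℝ ×
             Matrix (Fin M) (Fin N) ℝ × Matrix (Fin M) (Fin N) ℝ ×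
             Matrix (Fin M) (Fin N) ℝ,
        q.1 ∈ S1 Ustar Vstar ∧ q.2.1 ∈ S2 Ustar Vstar ∧ q.2.2.1 ∈ S3 Ustar Vstar ∧
        q.2.2.2.1 ∈ S4 Ustar Vstar ∧ q.2.2.2.2 ∈ S5 Ustar Vstar ∧
        Z = q.1 + q.2.1 + q.2.2.1 + q.2.2.2.1 + q.2.2.2.2) := by
  refine ⟨?_, ?_, ?_⟩
  · -- subspaces
    intro S hS
    simp only [Set.mem_insert_iff, Set.mem_singleton_iff] at hS
    rcases hS with rfl | rfl | rfl | rfl | rfl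
    · exact ⟨S1sub Ustar Vstar, rfl⟩
    · exact ⟨S2sub Ustar Vstar, rfl⟩
    · exact ⟨S3sub Ustar Vstar, rfl⟩
    · exact ⟨S4sub Ustar Vstar, rfl⟩
    · exact ⟨S5sub Ustar Vstar, rfl⟩
  · -- orthogonality
    intro i j hij Z₁ h1 Z₂ h2
    fin_cases i <;> fin_cases j <;>
      first
        | exact absurd rfl hij
        | exact orth12 h1 h2
        | exact orth13 h1 h2
        | exact orth14 h1 h2
        | exact orth15 h1 h2
        | exact orth23 h1 h2
        | exact orth24 h1 h2
        | exact orth25 h1 h2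
        | exact orth34 h1 h2
        | exact orth35 h1 h2
        | exact orth45 h1 h2
        | exact (frob_comm Z₁ Z₂).trans (orth12 h2 h1)
        | exact (frob_comm Z₁ Z₂).trans (orth13 h2 h1)
        | exact (frob_comm Z₁ Z₂).trans (orth14 h2 h1)
        | exact (frob_comm Z₁ Z₂).trans (orth15 h2 h1)
        | exact (frob_comm Z₁ Z₂).trans (orth23 h2 h1)
        | exact (frob_comm Z₁ Z₂).trans (orth24 h2 h1)
        | exact (frob_comm Z₁ Z₂).trans (orth25 h2 h1)
        | exact (frob_comm Z₁ Z₂).trans (orth34 h2 h1)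
        | exact (frob_comm Z₁ Z₂).trans (orth35 h2 h1)
        | exact (frob_comm Z₁ Z₂).trans (orth45 h2 h1)
  · -- unique decomposition
    intro Z
    obtain ⟨Z1, Z2, Z3, Z4, Z5, h1, h2, h3, h4, h5, hZ⟩ :=
      decomp_exists Ustar Vstar hU hV Z
    refine ⟨(Z1, Z2, Z3, Z4, Z5), ⟨h1, h2, h3, h4, h5, hZ⟩, ?_⟩
    rintro ⟨p1, p2, p3, p4, p5⟩ ⟨m1, m2, m3, m4, m5, hP⟩
    have hD1 : p1 - Z1 ∈ S1 Ustar Vstar := (S1sub Ustar Vstar).sub_mem m1 h1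
    have hD2 : p2 - Z2 ∈ S2 Ustar Vstar := (S2sub Ustar Vstar).sub_mem m2 h2
    have hD3 : p3 - Z3 ∈ S3 Ustar Vstar := (S3sub Ustar Vstar).sub_mem m3 h3
    have hD4 : p4 - Z4 ∈ S4 Ustar Vstar := (S4sub Ustar Vstar).sub_mem m4 h4
    have hD5 : p5 - Z5 ∈ S5 Ustar Vstar := (S5sub Ustar Vstar).sub_mem m5 h5
    set D1 := p1 - Z1
    set D2 := p2 - Z2
    set D3 := p3 - Z3
    set D4 := p4 - Z4
    set D5 := p5 - Z5
    have hsum : D1 + D2 + D3 + D4 + D5 = 0 := by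
      have : Z1 + Z2 + Z3 + Z4 + Z5 = p1 + p2 + p3 + p4 + p5 := by rw [← hZ, ← hP]
      simp only [D1, D2, D3, D4, D5]
      rw [show p1 - Z1 + (p2 - Z2) + (p3 - Z3) + (p4 - Z4) + (p5 - Z5)
        = (p1 + p2 + p3 + p4 + p5) - (Z1 + Z2 + Z3 + Z4 + Z5) by abel, this, sub_self]
    have expand : ∀ D : Matrix (Fin M) (Fin N) ℝ,
        frobInner D (D1 + D2 + D3 + D4 + D5) =
        frobInner D D1 + frobInner D D2 + frobInner D D3 + frobInner D D4 + frobInner D D5 := by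
      intro D
      rw [frob_add_right, frob_add_right, frob_add_right, frob_add_right]
    have e1 : D1 = 0 := by
      apply frob_self_eq_zero
      have h := expand D1
      rw [hsum, frob_zero_right, orth12 hD1 hD2, orth13 hD1 hD3, orth14 hD1 hD4,
        orth15 hD1 hD5] at h
      linarith
    have e2 : D2 = 0 := by
      apply frob_self_eq_zero
      have h := expand D2
      rw [hsum, frob_zero_right, frob_comm D2 D1, orth12 hD1 hD2, orth23 hD2 hD3,
        orth24 hD2 hD4, orth25 hD2 hD5] at h
      linarith
    have e3 : D3 = 0 := by
      apply frob_self_eq_zero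
      have h := expand D3
      rw [hsum, frob_zero_right, frob_comm D3 D1, orth13 hD1 hD3, frob_comm D3 D2,
        orth23 hD2 hD3, orth34 hD3 hD4, orth35 hD3 hD5] at h
      linarith
    have e4 : D4 = 0 := by
      apply frob_self_eq_zero
      have h := expand D4
      rw [hsum, frob_zero_right, frob_comm D4 D1, orth14 hD1 hD4, frob_comm D4 D2,
        orth24 hD2 hD4, frob_comm D4 D3, orth34 hD3 hD4, orth45 hD4 hD5] at h
      linarith
    have e5 : D5 = 0 := by
      apply frob_self_eq_zero
      have h := expand D5
      rw [hsum, frob_zero_right, frob_comm D5 D1, orth15 hD1 hD5, frob_comm D5 D2,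
        orth25 hD2 hD5, frob_comm D5 D3, orth35 hD3 hD5, frob_comm D5 D4,
        orth45 hD4 hD5] at h
      linarith
    simp only [Prod.mk.injEq]
    exact ⟨sub_eq_zero.mp e1, sub_eq_zero.mp e2, sub_eq_zero.mp e3,
      sub_eq_zero.mp e4, sub_eq_zero.mp e5⟩
end

section
/- Let G = (V, E_G) be an undirected graph on N nodes and let V* ⊆ V be the vertex set of an n-node clique of G (n ≥ 1), with characteristic vector v̄ ∈ R^V, and let X* = v̄ v̄ᵀ. Suppose there exist W ∈ R^{V×V}, λ ∈ R^{V×V}, and μ ≥ 0 such that W v̄ = 0, v̄ᵀ W = 0, ‖W‖ ≤ 1, and v̄ v̄ᵀ/n + W = μ e eᵀ + Σ_{(i,j) ∈ Ẽ} λ_{ij} e_i e_jᵀ, where Ẽ is the set of pairs (i,j) with i ≠ j and (i,j) ∉ E_G. Then X* is an optimal solution of the clique relaxation (C), and V* is a maximum clique of G. If moreover ‖W‖ < 1 and μ > 0, then X* is the unique optimal solution of (C) and V* is the unique maximum clique of G. -/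
open Matrix

/-- Feasibility for the clique relaxation (C): `∑_{i,j} X_{ij} ≥ n²` and `X_{ij} = 0` for
distinct non-adjacent `i, j`. -/
def FeasC {V : Type*} [Fintype V] (G : SimpleGraph V) (n : ℕ)
    (X : Matrix V V ℝ) : Prop :=
  ((n : ℝ) ^ 2 ≤ ∑ i, ∑ j, X i j) ∧ ∀ i j, i ≠ j → ¬G.Adj i j → X i j = 0

variable {V : Type} [Fintype V] [DecidableEq V]

lemma dot_nonneg' (x : V → ℝ) : 0 ≤ x ⬝ᵥ x :=
  Finset.sum_nonneg fun i _ => mul_self_nonneg _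

lemma dot_self_eq_zero' {x : V → ℝ} (h : x ⬝ᵥ x = 0) : x = 0 := by
  funext i
  have := (Finset.sum_eq_zero_iff_of_nonneg (fun i _ => mul_self_nonneg (x i))).mp h i
    (Finset.mem_univ i)
  have := mul_self_eq_zero.mp this
  simpa using this

lemma euclid_norm_sq (x : V → ℝ) :
    ‖(WithLp.equiv 2 (V → ℝ)).symm x‖ ^ 2 = x ⬝ᵥ x := by
  rw [EuclideanSpace.norm_eq, Real.sq_sqrt (Finset.sum_nonneg fun i _ => sq_nonneg _)]
  simp [dotProduct, sq]

lemma euclid_norm_eq (x : V → ℝ) :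
    ‖(WithLp.equiv 2 (V → ℝ)).symm x‖ = Real.sqrt (x ⬝ᵥ x) := by
  rw [← euclid_norm_sq x, Real.sqrt_sq (norm_nonneg _)]

lemma dot_CS (x y : V → ℝ) : x ⬝ᵥ y ≤ Real.sqrt (x ⬝ᵥ x) * Real.sqrt (y ⬝ᵥ y) := by
  have h := real_inner_le_norm ((WithLp.equiv 2 (V → ℝ)).symm x) ((WithLp.equiv 2 (V → ℝ)).symm y)
  rw [euclid_norm_eq, euclid_norm_eq] at h
  simpa [PiLp.inner_apply, dotProduct, mul_comm] using h

lemma spec_dot (A : Matrix V V ℝ) (x : V → ℝ) :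
    (A *ᵥ x) ⬝ᵥ (A *ᵥ x) ≤ (matSpectralNorm A)^2 * (x ⬝ᵥ x) := by
  have h := (LinearMap.toContinuousLinearMap (Matrix.toEuclideanLin A)).le_opNorm
      ((WithLp.equiv 2 (V → ℝ)).symm x)
  have h2 : (LinearMap.toContinuousLinearMap (Matrix.toEuclideanLin A))
      ((WithLp.equiv 2 (V → ℝ)).symm x) = (WithLp.equiv 2 (V → ℝ)).symm (A *ᵥ x) := rfl
  rw [h2, euclid_norm_eq, euclid_norm_eq] at h
  have hnn : 0 ≤ matSpectralNorm A := norm_nonneg _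
  have := mul_le_mul h h (Real.sqrt_nonneg _) (by positivity)
  calc (A *ᵥ x) ⬝ᵥ (A *ᵥ x)
      = Real.sqrt ((A *ᵥ x) ⬝ᵥ (A *ᵥ x)) * Real.sqrt ((A *ᵥ x) ⬝ᵥ (A *ᵥ x)) :=
        (Real.mul_self_sqrt (dot_nonneg' _)).symm
    _ ≤ (matSpectralNorm A * Real.sqrt (x ⬝ᵥ x)) * (matSpectralNorm A * Real.sqrt (x ⬝ᵥ x)) := this
    _ = (matSpectralNorm A)^2 * (Real.sqrt (x ⬝ᵥ x) * Real.sqrt (x ⬝ᵥ x)) := by ring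
    _ = (matSpectralNorm A)^2 * (x ⬝ᵥ x) := by rw [Real.mul_self_sqrt (dot_nonneg' _)]

lemma onb_sum_mul (o : OrthonormalBasis V ℝ (EuclideanSpace ℝ V)) (a b : V) :
    ∑ k, (o k : V → ℝ) a * (o k : V → ℝ) b = if a = b then 1 else 0 := by
  have h := o.sum_inner_mul_inner (EuclideanSpace.single a (1:ℝ)) (EuclideanSpace.single b (1:ℝ))
  simp only [EuclideanSpace.inner_single_left, EuclideanSpace.inner_single_right,
    RCLike.star_def, conj_trivial, one_mul, mul_one] at h
  rw [h]
  simp [EuclideanSpace.single_apply, eq_comm]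

lemma onb_dot_self (o : OrthonormalBasis V ℝ (EuclideanSpace ℝ V)) (j : V) :
    (o j : V → ℝ) ⬝ᵥ (o j : V → ℝ) = 1 := by
  have h := orthonormal_iff_ite.mp o.orthonormal j j
  simp only [if_pos rfl] at h
  rw [PiLp.inner_apply] at h
  simpa [dotProduct, sq] using h

lemma onb_trace (o : OrthonormalBasis V ℝ (EuclideanSpace ℝ V)) (M : Matrix V V ℝ) :
    ∑ k, (o k : V → ℝ) ⬝ᵥ (M *ᵥ (o k : V → ℝ)) = ∑ a, M a a := by
  have step : ∀ k, (o k : V → ℝ) ⬝ᵥ (M *ᵥ (o k : V → ℝ))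
      = ∑ a, ∑ b, M a b * ((o k : V → ℝ) a * (o k : V → ℝ) b) := by
    intro k
    simp only [dotProduct, mulVec, Finset.mul_sum]
    refine Finset.sum_congr rfl fun a _ => Finset.sum_congr rfl fun b _ => by ring
  simp only [step]
  rw [Finset.sum_comm]
  refine Finset.sum_congr rfl fun a _ => ?_
  rw [Finset.sum_comm]
  have : ∀ b, ∑ k, M a b * ((o k : V → ℝ) a * (o k : V → ℝ) b)
      = M a b * (if a = b then 1 else 0) := fun b => by
    rw [← Finset.mul_sum, onb_sum_mul]
  simp only [this, mul_ite, mul_one, mul_zero]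
  simp

lemma dot_mul_dot (Y X : Matrix V V ℝ) (v : V → ℝ) :
    (Y *ᵥ v) ⬝ᵥ (X *ᵥ v) = v ⬝ᵥ ((Yᵀ * X) *ᵥ v) := by
  conv_rhs => rw [← mulVec_mulVec, dotProduct_mulVec, vecMul_transpose]

lemma frob_sum (o : OrthonormalBasis V ℝ (EuclideanSpace ℝ V)) (Y X : Matrix V V ℝ) :
    ∑ i, ∑ j, Y i j * X i j = ∑ k, (Y *ᵥ (o k : V → ℝ)) ⬝ᵥ (X *ᵥ (o k : V → ℝ)) := by
  simp only [dot_mul_dot, onb_trace]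
  rw [Finset.sum_comm]
  refine Finset.sum_congr rfl fun a _ => ?_
  simp [Matrix.mul_apply, transpose_apply]


lemma Xdot_eig (X : Matrix V V ℝ) (j : V) :
    (X *ᵥ ((Matrix.isHermitian_transpose_mul_self X).eigenvectorBasis j : V → ℝ)) ⬝ᵥ
      (X *ᵥ ((Matrix.isHermitian_transpose_mul_self X).eigenvectorBasis j : V → ℝ))
    = (Matrix.isHermitian_transpose_mul_self X).eigenvalues j := by
  set hH := Matrix.isHermitian_transpose_mul_self X
  have hv : (Xᵀ * X) *ᵥ (hH.eigenvectorBasis j : V → ℝ)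
      = hH.eigenvalues j • (hH.eigenvectorBasis j : V → ℝ) := hH.mulVec_eigenvectorBasis j
  rw [dot_mul_dot, hv, dotProduct_smul, onb_dot_self]
  simp

lemma sum_eig (X : Matrix V V ℝ) :
    ∑ j, (Matrix.isHermitian_transpose_mul_self X).eigenvalues j = ∑ a, (Xᴴ * X) a a := by
  set hH := Matrix.isHermitian_transpose_mul_self X
  rw [← onb_trace hH.eigenvectorBasis (Xᴴ * X)]
  refine Finset.sum_congr rfl fun j _ => ?_
  have hv : (Xᴴ * X) *ᵥ (hH.eigenvectorBasis j : V → ℝ)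
      = hH.eigenvalues j • (hH.eigenvectorBasis j : V → ℝ) := hH.mulVec_eigenvectorBasis j
  rw [hv, dotProduct_smul, onb_dot_self]
  simp

lemma sum_eig_sq (X : Matrix V V ℝ) :
    ∑ j, ((Matrix.isHermitian_transpose_mul_self X).eigenvalues j)^2
      = ∑ i, ∑ j, ((Xᴴ * X) i j) * ((Xᴴ * X) i j) := by
  set hH := Matrix.isHermitian_transpose_mul_self X
  rw [frob_sum hH.eigenvectorBasis (Xᴴ * X) (Xᴴ * X)]
  refine Finset.sum_congr rfl fun j _ => ?_
  have hv : (Xᴴ * X) *ᵥ (hH.eigenvectorBasis j : V → ℝ)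
      = hH.eigenvalues j • (hH.eigenvectorBasis j : V → ℝ) := hH.mulVec_eigenvectorBasis j
  rw [hv, smul_dotProduct, dotProduct_smul, onb_dot_self]
  simp [sq]

lemma sqrt_sum_eq {f : V → ℝ} {s : ℝ} (hf : ∀ j, 0 ≤ f j)
    (h1 : ∑ j, f j = s) (h2 : ∑ j, (f j)^2 = s^2) :
    ∑ j, Real.sqrt (f j) = Real.sqrt s := by
  have key : ∀ j k, j ≠ k → f j * f k = 0 := by
    intro j k hjk
    have expand : s^2 = ∑ j, ∑ k, f j * f k := by
      rw [← h1, sq, Finset.sum_mul_sum]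
    have diag : ∑ j, ∑ k, f j * f k = ∑ j, (f j)^2 + ∑ j, ∑ k ∈ Finset.univ.erase j, f j * f k := by
      rw [← Finset.sum_add_distrib]
      refine Finset.sum_congr rfl fun j _ => ?_
      rw [sq, ← Finset.add_sum_erase _ _ (Finset.mem_univ j)]
    have hz : ∑ j, ∑ k ∈ Finset.univ.erase j, f j * f k = 0 := by
      have := expand.trans diag
      rw [h2] at this
      linarith
    have hnn : ∀ j ∈ Finset.univ, (0:ℝ) ≤ ∑ k ∈ Finset.univ.erase j, f j * f k :=
      fun j _ => Finset.sum_nonneg fun k _ => mul_nonneg (hf j) (hf k)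
    have hj0 := (Finset.sum_eq_zero_iff_of_nonneg hnn).mp hz j (Finset.mem_univ j)
    have hnn2 : ∀ k ∈ Finset.univ.erase j, (0:ℝ) ≤ f j * f k :=
      fun k _ => mul_nonneg (hf j) (hf k)
    exact (Finset.sum_eq_zero_iff_of_nonneg hnn2).mp hj0 k
      (Finset.mem_erase.mpr ⟨(Ne.symm hjk), Finset.mem_univ k⟩)
  have hsq : (∑ j, Real.sqrt (f j))^2 = s := by
    rw [sq, Finset.sum_mul_sum]
    calc ∑ j, ∑ k, Real.sqrt (f j) * Real.sqrt (f k)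
        = ∑ j, ∑ k, (if j = k then f j else 0) := by
          refine Finset.sum_congr rfl fun j _ => Finset.sum_congr rfl fun k _ => ?_
          by_cases hjk : j = k
          · subst hjk; rw [if_pos rfl]; exact Real.mul_self_sqrt (hf j)
          · rw [if_neg hjk, ← Real.sqrt_mul (hf j), key j k hjk, Real.sqrt_zero]
      _ = ∑ j, f j := by simp
      _ = s := h1
  have hnn : 0 ≤ ∑ j, Real.sqrt (f j) := Finset.sum_nonneg fun j _ => Real.sqrt_nonneg _
  rw [← hsq, Real.sqrt_sq hnn]

lemma nuclear_smul_vecMulVec (c : ℝ) (hc : 0 ≤ c) (u : V → ℝ) :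
    nuclearNorm (c • vecMulVec u u) = c * (u ⬝ᵥ u) := by
  set A := c • vecMulVec u u with hA
  set D := u ⬝ᵥ u with hD
  have hDnn : 0 ≤ D := dot_nonneg' u
  have hs : ∑ i, u i * u i = D := rfl
  have hent : ∀ a b, (Aᴴ * A) a b = (c^2 * D) * (u a * u b) := by
    intro a b
    simp only [Matrix.mul_apply, Matrix.conjTranspose_apply, hA, Matrix.smul_apply,
      vecMulVec_apply, star_trivial, smul_eq_mul]
    have : ∀ k, (c * (u k * u a)) * (c * (u k * u b))
        = (c^2 * (u a * u b)) * (u k * u k) := fun k => by ring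
    simp only [this, ← Finset.mul_sum]
    rw [hs]
    ring
  have htr : ∑ a, (Aᴴ * A) a a = (c * D)^2 := by
    simp only [hent, ← Finset.mul_sum]
    rw [hs]
    ring
  have hsq2 : ∑ i, ∑ j, (Aᴴ * A) i j * (Aᴴ * A) i j = ((c * D)^2)^2 := by
    simp only [hent]
    have : ∀ i j, ((c^2*D) * (u i * u j)) * ((c^2*D) * (u i * u j))
        = ((c^2*D)^2 * (u i * u i)) * (u j * u j) := fun i j => by ring
    simp only [this, ← Finset.mul_sum, ← Finset.sum_mul]
    rw [hs]
    ring
  have := sqrt_sum_eq (s := (c*D)^2)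
    (f := fun j => (Matrix.isHermitian_transpose_mul_self A).eigenvalues j)
    (fun j => Matrix.eigenvalues_conjTranspose_mul_self_nonneg A j)
    ((sum_eig A).trans htr) ((sum_eig_sq A).trans hsq2)
  rw [nuclearNorm, this, Real.sqrt_sq (mul_nonneg hc hDnn)]

lemma charVec_dot (S : Finset V) : charVec S ⬝ᵥ charVec S = (S.card : ℝ) := by
  simp [dotProduct, charVec, Finset.sum_ite_mem]

lemma charVec_sum (S : Finset V) : ∑ i, charVec S i = (S.card : ℝ) := by
  simp [charVec, Finset.sum_ite_mem]

lemma vecMulVec_mulVec' (a b x : V → ℝ) : vecMulVec a b *ᵥ x = (b ⬝ᵥ x) • a := by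
  funext i
  simp only [mulVec, vecMulVec_apply, dotProduct, Pi.smul_apply, smul_eq_mul, Finset.sum_mul]
  exact Finset.sum_congr rfl fun k _ => by ring

lemma Ykey {n : ℝ} (hn : 0 < n) (c : V → ℝ) (hcc : c ⬝ᵥ c = n) (W : Matrix V V ℝ)
    (hWc : W *ᵥ c = 0) (hcW : c ᵥ* W = 0) (x : V → ℝ) :
    ((n⁻¹ • vecMulVec c c + W) *ᵥ x) ⬝ᵥ ((n⁻¹ • vecMulVec c c + W) *ᵥ x)
      ≤ (c ⬝ᵥ x)^2/n + (matSpectralNorm W)^2 *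
          ((x - (n⁻¹ * (c ⬝ᵥ x)) • c) ⬝ᵥ (x - (n⁻¹ * (c ⬝ᵥ x)) • c))
    ∧ x ⬝ᵥ x = (c ⬝ᵥ x)^2/n
          + (x - (n⁻¹ * (c ⬝ᵥ x)) • c) ⬝ᵥ (x - (n⁻¹ * (c ⬝ᵥ x)) • c) := by
  set d := c ⬝ᵥ x with hd
  set u := x - (n⁻¹ * d) • c with hu
  have hcu : c ⬝ᵥ u = 0 := by
    rw [hu, dotProduct_sub, dotProduct_smul, hcc, smul_eq_mul, ← hd]
    field_simp
    ring
  have hWu : W *ᵥ u = W *ᵥ x := by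
    rw [hu, Matrix.mulVec_sub, Matrix.mulVec_smul, hWc]
    simp
  have hcWu : c ⬝ᵥ (W *ᵥ u) = 0 := by
    rw [dotProduct_mulVec, hcW, zero_dotProduct]
  have hYx : (n⁻¹ • vecMulVec c c + W) *ᵥ x = (n⁻¹ * d) • c + W *ᵥ u := by
    rw [Matrix.add_mulVec, Matrix.smul_mulVec, vecMulVec_mulVec', hWu, smul_smul, ← hd]
  constructor
  · rw [hYx]
    have expand : ((n⁻¹ * d) • c + W *ᵥ u) ⬝ᵥ ((n⁻¹ * d) • c + W *ᵥ u)
        = (n⁻¹ * d)^2 * (c ⬝ᵥ c) + 2 * (n⁻¹ * d) * (c ⬝ᵥ (W *ᵥ u))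
          + (W *ᵥ u) ⬝ᵥ (W *ᵥ u) := by
      rw [add_dotProduct, dotProduct_add, dotProduct_add, smul_dotProduct, smul_dotProduct,
        dotProduct_smul, dotProduct_smul, dotProduct_comm (W *ᵥ u) c]
      simp only [smul_eq_mul]
      ring
    rw [expand, hcc, hcWu]
    have h1 : (n⁻¹ * d)^2 * n = d^2/n := by field_simp
    have h2 := spec_dot W u
    linarith
  · have hx : x = (n⁻¹ * d) • c + u := by rw [hu]; abel
    conv_lhs => rw [hx]
    rw [add_dotProduct, dotProduct_add, dotProduct_add, smul_dotProduct, smul_dotProduct,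
      dotProduct_smul, dotProduct_smul, hcc, hcu, dotProduct_comm u c, hcu]
    simp only [smul_eq_mul]
    field_simp
    ring

lemma Ynorm_le {n : ℝ} (hn : 0 < n) (c : V → ℝ) (hcc : c ⬝ᵥ c = n) (W : Matrix V V ℝ)
    (hWc : W *ᵥ c = 0) (hcW : c ᵥ* W = 0) (hW1 : matSpectralNorm W ≤ 1) (x : V → ℝ) :
    ((n⁻¹ • vecMulVec c c + W) *ᵥ x) ⬝ᵥ ((n⁻¹ • vecMulVec c c + W) *ᵥ x) ≤ x ⬝ᵥ x := by
  obtain ⟨h1, h2⟩ := Ykey hn c hcc W hWc hcW x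
  have hs0 : 0 ≤ matSpectralNorm W := norm_nonneg _
  have hs1 : (matSpectralNorm W)^2 ≤ 1 := by nlinarith
  have huu : 0 ≤ (x - (n⁻¹ * (c ⬝ᵥ x)) • c) ⬝ᵥ (x - (n⁻¹ * (c ⬝ᵥ x)) • c) := dot_nonneg' _
  nlinarith

lemma Yterm_le {n : ℝ} (hn : 0 < n) (c : V → ℝ) (hcc : c ⬝ᵥ c = n) (W : Matrix V V ℝ)
    (hWc : W *ᵥ c = 0) (hcW : c ᵥ* W = 0) (hW1 : matSpectralNorm W ≤ 1) (X : Matrix V V ℝ)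
    (k : V) :
    ((n⁻¹ • vecMulVec c c + W) *ᵥ ((Matrix.isHermitian_transpose_mul_self X).eigenvectorBasis k : V → ℝ))
      ⬝ᵥ (X *ᵥ ((Matrix.isHermitian_transpose_mul_self X).eigenvectorBasis k : V → ℝ))
    ≤ Real.sqrt ((Matrix.isHermitian_transpose_mul_self X).eigenvalues k) := by
  set Y := n⁻¹ • vecMulVec c c + W with hY
  set v : V → ℝ := ((Matrix.isHermitian_transpose_mul_self X).eigenvectorBasis k : V → ℝ)
  calc (Y *ᵥ v) ⬝ᵥ (X *ᵥ v)
      ≤ Real.sqrt ((Y *ᵥ v) ⬝ᵥ (Y *ᵥ v)) * Real.sqrt ((X *ᵥ v) ⬝ᵥ (X *ᵥ v)) := dot_CS _ _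
    _ ≤ 1 * Real.sqrt ((Matrix.isHermitian_transpose_mul_self X).eigenvalues k) := by
        rw [Xdot_eig]
        refine mul_le_mul_of_nonneg_right ?_ (Real.sqrt_nonneg _)
        rw [show (1:ℝ) = Real.sqrt 1 by simp]
        refine Real.sqrt_le_sqrt ?_
        have := Ynorm_le hn c hcc W hWc hcW hW1 v
        rwa [onb_dot_self] at this
    _ = _ := one_mul _

lemma nuclear_lb {n : ℝ} (hn : 0 < n) (c : V → ℝ) (hcc : c ⬝ᵥ c = n) (W : Matrix V V ℝ)
    (hWc : W *ᵥ c = 0) (hcW : c ᵥ* W = 0) (hW1 : matSpectralNorm W ≤ 1) (X : Matrix V V ℝ) :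
    ∑ i, ∑ j, (n⁻¹ • vecMulVec c c + W) i j * X i j ≤ nuclearNorm X := by
  rw [frob_sum (Matrix.isHermitian_transpose_mul_self X).eigenvectorBasis, nuclearNorm]
  exact Finset.sum_le_sum fun k _ => Yterm_le hn c hcc W hWc hcW hW1 X k

set_option maxHeartbeats 1000000 in
lemma equality_case {n : ℝ} (hn : 0 < n) (c : V → ℝ) (hcc : c ⬝ᵥ c = n)
    (hcsum : ∑ i, c i = n)
    (W : Matrix V V ℝ) (hWc : W *ᵥ c = 0) (hcW : c ᵥ* W = 0)
    (hWlt : matSpectralNorm W < 1) (X : Matrix V V ℝ)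
    (hsum : ∑ i, ∑ j, (n⁻¹ • vecMulVec c c + W) i j * X i j = nuclearNorm X)
    (hXsum : ∑ i, ∑ j, X i j = n^2) :
    X = vecMulVec c c := by
  have hW1 : matSpectralNorm W ≤ 1 := le_of_lt hWlt
  set Y := n⁻¹ • vecMulVec c c + W with hY
  have hH : (Xᴴ * X).IsHermitian := Matrix.isHermitian_transpose_mul_self X
  have hnnX : nuclearNorm X = ∑ k, Real.sqrt (hH.eigenvalues k) := rfl
  have hlamnn : ∀ k, 0 ≤ hH.eigenvalues k := fun k => Matrix.eigenvalues_conjTranspose_mul_self_nonneg X k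
  have hfs : ∑ i, ∑ j, Y i j * X i j
      = ∑ k, (Y *ᵥ (hH.eigenvectorBasis k : V → ℝ)) ⬝ᵥ (X *ᵥ (hH.eigenvectorBasis k : V → ℝ)) :=
    frob_sum hH.eigenvectorBasis Y X
  have hterm : ∀ k, (Y *ᵥ (hH.eigenvectorBasis k : V → ℝ)) ⬝ᵥ (X *ᵥ (hH.eigenvectorBasis k : V → ℝ))
      ≤ Real.sqrt (hH.eigenvalues k) := fun k => Yterm_le hn c hcc W hWc hcW hW1 X k
  have hteq : ∀ k, (Y *ᵥ (hH.eigenvectorBasis k : V → ℝ)) ⬝ᵥ (X *ᵥ (hH.eigenvectorBasis k : V → ℝ))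
      = Real.sqrt (hH.eigenvalues k) := by
    rw [hfs, hnnX] at hsum
    have hz : ∑ k, (Real.sqrt (hH.eigenvalues k)
        - (Y *ᵥ (hH.eigenvectorBasis k : V → ℝ)) ⬝ᵥ (X *ᵥ (hH.eigenvectorBasis k : V → ℝ))) = 0 := by
      rw [Finset.sum_sub_distrib, hsum]
      ring
    intro k
    have := (Finset.sum_eq_zero_iff_of_nonneg
      (fun k _ => sub_nonneg.mpr (hterm k))).mp hz k (Finset.mem_univ k)
    linarith [this]
  -- structure of eigenvectors with positive eigenvalue
  have hXo : ∀ k, X *ᵥ (hH.eigenvectorBasis k : V → ℝ)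
      = Real.sqrt (hH.eigenvalues k) • (hH.eigenvectorBasis k : V → ℝ)
      ∧ (hH.eigenvalues k ≠ 0 → (hH.eigenvectorBasis k : V → ℝ)
          = (n⁻¹ * (c ⬝ᵥ (hH.eigenvectorBasis k : V → ℝ))) • c) := by
    intro k
    set v : V → ℝ := (hH.eigenvectorBasis k : V → ℝ) with hv
    have hvv : v ⬝ᵥ v = 1 := onb_dot_self _ k
    have hXv : (X *ᵥ v) ⬝ᵥ (X *ᵥ v) = hH.eigenvalues k := Xdot_eig X k
    have hteqk : (Y *ᵥ v) ⬝ᵥ (X *ᵥ v) = Real.sqrt (hH.eigenvalues k) := hteq k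
    by_cases hk : hH.eigenvalues k = 0
    · have : X *ᵥ v = 0 := dot_self_eq_zero' (by rw [hXv, hk])
      exact ⟨by rw [this, hk, Real.sqrt_zero, zero_smul], fun h => absurd hk h⟩
    · have hlampos : 0 < hH.eigenvalues k := lt_of_le_of_ne (hlamnn k) (Ne.symm hk)
      have hsqrtpos : 0 < Real.sqrt (hH.eigenvalues k) := Real.sqrt_pos.mpr hlampos
      have hYY1 : 1 ≤ (Y *ᵥ v) ⬝ᵥ (Y *ᵥ v) := by
        have hCS := dot_CS (Y *ᵥ v) (X *ᵥ v)
        rw [hXv, hteqk] at hCS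
        have h1 : 1 ≤ Real.sqrt ((Y *ᵥ v) ⬝ᵥ (Y *ᵥ v)) := by
          by_contra hlt
          push_neg at hlt
          nlinarith [Real.sqrt_nonneg ((Y *ᵥ v) ⬝ᵥ (Y *ᵥ v))]
        calc (1:ℝ) = 1 * 1 := by ring
          _ ≤ Real.sqrt ((Y *ᵥ v) ⬝ᵥ (Y *ᵥ v)) * Real.sqrt ((Y *ᵥ v) ⬝ᵥ (Y *ᵥ v)) :=
              mul_le_mul h1 h1 (by norm_num) (Real.sqrt_nonneg _)
          _ = (Y *ᵥ v) ⬝ᵥ (Y *ᵥ v) := Real.mul_self_sqrt (dot_nonneg' _)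
      obtain ⟨hup, hdecomp⟩ := Ykey hn c hcc W hWc hcW v
      rw [← hY] at hup
      set u : V → ℝ := v - (n⁻¹ * (c ⬝ᵥ v)) • c with hu
      have huu : 0 ≤ u ⬝ᵥ u := dot_nonneg' u
      have hs0 : 0 ≤ matSpectralNorm W := norm_nonneg _
      have h4 : 0 < 1 - matSpectralNorm W^2 := by nlinarith
      have h3 : (1 - matSpectralNorm W^2) * (u ⬝ᵥ u) ≤ 0 := by nlinarith
      have huu0 : u ⬝ᵥ u = 0 :=
        (mul_eq_zero.mp (le_antisymm h3 (mul_nonneg h4.le huu))).resolve_left (ne_of_gt h4)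
      have hu0 : u = 0 := dot_self_eq_zero' huu0
      have hveq : v = (n⁻¹ * (c ⬝ᵥ v)) • c := sub_eq_zero.mp hu0
      refine ⟨?_, fun _ => hveq⟩
      have hYv : Y *ᵥ v = v := by
        conv_lhs => rw [hveq]
        rw [Matrix.mulVec_smul]
        have hYc : Y *ᵥ c = c := by
          rw [hY, Matrix.add_mulVec, Matrix.smul_mulVec, vecMulVec_mulVec', hWc, hcc,
            smul_smul, add_zero, inv_mul_cancel₀ (ne_of_gt hn), one_smul]
        rw [hYc, ← hveq]
      have htk : v ⬝ᵥ (X *ᵥ v) = Real.sqrt (hH.eigenvalues k) := by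
        rw [← hteqk, hYv]
      have hcomm : (X *ᵥ v) ⬝ᵥ v = Real.sqrt (hH.eigenvalues k) := by
        rw [dotProduct_comm]; exact htk
      have hss : Real.sqrt (hH.eigenvalues k) * Real.sqrt (hH.eigenvalues k) = hH.eigenvalues k := Real.mul_self_sqrt (hlamnn k)
      have hnetworm : (X *ᵥ v - Real.sqrt (hH.eigenvalues k) • v) ⬝ᵥ (X *ᵥ v - Real.sqrt (hH.eigenvalues k) • v) = 0 := by
        simp only [sub_dotProduct, dotProduct_sub, smul_dotProduct, dotProduct_smul,
          smul_eq_mul, hXv, hvv, hcomm, htk]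
        nlinarith [hss]
      exact sub_eq_zero.mp (dot_self_eq_zero' hnetworm)
  -- entry formula
  have hXab : ∀ a b, X a b = ∑ k, Real.sqrt (hH.eigenvalues k)
      * ((hH.eigenvectorBasis k : V → ℝ) a * (hH.eigenvectorBasis k : V → ℝ) b) := by
    intro a b
    have step : ∀ k, Real.sqrt (hH.eigenvalues k)
        * ((hH.eigenvectorBasis k : V → ℝ) a * (hH.eigenvectorBasis k : V → ℝ) b)
        = (∑ j, X a j * (hH.eigenvectorBasis k : V → ℝ) j) * (hH.eigenvectorBasis k : V → ℝ) b := by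
      intro k
      have h2 : (X *ᵥ (hH.eigenvectorBasis k : V → ℝ)) a
          = Real.sqrt (hH.eigenvalues k) * (hH.eigenvectorBasis k : V → ℝ) a := by
        rw [(hXo k).1]; rfl
      rw [show (∑ j, X a j * (hH.eigenvectorBasis k : V → ℝ) j)
        = (X *ᵥ (hH.eigenvectorBasis k : V → ℝ)) a from rfl, h2]
      ring
    simp only [step, Finset.sum_mul]
    rw [Finset.sum_comm]
    have key : ∀ j, ∑ k, X a j * (hH.eigenvectorBasis k : V → ℝ) j * (hH.eigenvectorBasis k : V → ℝ) b
        = X a j * (if j = b then 1 else 0) := by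
      intro j
      calc ∑ k, X a j * (hH.eigenvectorBasis k : V → ℝ) j * (hH.eigenvectorBasis k : V → ℝ) b
          = X a j * ∑ k, (hH.eigenvectorBasis k : V → ℝ) j * (hH.eigenvectorBasis k : V → ℝ) b := by
            rw [Finset.mul_sum]
            exact Finset.sum_congr rfl fun k _ => by ring
        _ = X a j * (if j = b then 1 else 0) := by rw [onb_sum_mul]
    simp only [key, mul_ite, mul_one, mul_zero]
    simp
  -- some eigenvalue is nonzero
  have hex : ∃ j, hH.eigenvalues j ≠ 0 := by
    by_contra hall
    push_neg at hall
    have hz : ∀ a b, X a b = 0 := by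
      intro a b
      rw [hXab a b]
      exact Finset.sum_eq_zero fun k _ => by rw [hall k, Real.sqrt_zero, zero_mul]
    rw [Finset.sum_eq_zero (fun i _ => Finset.sum_eq_zero fun j _ => hz i j)] at hXsum
    nlinarith
  obtain ⟨j, hj⟩ := hex
  obtain ⟨d, hvj⟩ : ∃ d : ℝ, (hH.eigenvectorBasis j : V → ℝ) = (n⁻¹ * d) • c :=
    ⟨c ⬝ᵥ (hH.eigenvectorBasis j : V → ℝ), (hXo j).2 hj⟩
  have hdj : (n⁻¹ * d)^2 * n = 1 := by
    have hvv : (hH.eigenvectorBasis j : V → ℝ) ⬝ᵥ (hH.eigenvectorBasis j : V → ℝ) = 1 :=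
      onb_dot_self _ j
    rw [hvj, smul_dotProduct, dotProduct_smul, hcc] at hvv
    simp only [smul_eq_mul] at hvv
    linear_combination hvv
  have huniq : ∀ k, k ≠ j → hH.eigenvalues k = 0 := by
    intro k hkj
    by_contra hk
    obtain ⟨dk, hvk⟩ : ∃ dk : ℝ, (hH.eigenvectorBasis k : V → ℝ) = (n⁻¹ * dk) • c :=
      ⟨c ⬝ᵥ (hH.eigenvectorBasis k : V → ℝ), (hXo k).2 hk⟩
    have horth : (hH.eigenvectorBasis k : V → ℝ) ⬝ᵥ (hH.eigenvectorBasis j : V → ℝ) = 0 := by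
      have h := orthonormal_iff_ite.mp hH.eigenvectorBasis.orthonormal k j
      rw [if_neg hkj] at h
      simpa [PiLp.inner_apply, dotProduct, mul_comm] using h
    rw [hvj, hvk, smul_dotProduct, dotProduct_smul, hcc] at horth
    simp only [smul_eq_mul] at horth
    have hdk : (n⁻¹ * dk)^2 * n = 1 := by
      have hvv : (hH.eigenvectorBasis k : V → ℝ) ⬝ᵥ (hH.eigenvectorBasis k : V → ℝ) = 1 :=
        onb_dot_self _ k
      rw [hvk, smul_dotProduct, dotProduct_smul, hcc] at hvv
      simp only [smul_eq_mul] at hvv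
      linear_combination hvv
    have hprod : (n⁻¹ * dk * (n⁻¹ * d * n)) = 0 := horth
    have hcontr : (1:ℝ) = 0 := by
      calc (1:ℝ) = ((n⁻¹*d)^2*n) * ((n⁻¹*dk)^2*n) := by rw [hdj, hdk, one_mul]
        _ = (n⁻¹ * dk * (n⁻¹ * d * n)) * ((n⁻¹ * dk) * (n⁻¹ * d) * n) := by ring
        _ = 0 := by rw [hprod, zero_mul]
    exact one_ne_zero hcontr
  have hXab2 : ∀ a b, X a b = (Real.sqrt (hH.eigenvalues j) * (n⁻¹ * d)^2) * (c a * c b) := by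
    intro a b
    rw [hXab a b, Finset.sum_eq_single j
      (fun k _ hkj => by rw [huniq k hkj, Real.sqrt_zero, zero_mul])
      (fun h => absurd (Finset.mem_univ j) h)]
    rw [hvj]
    simp only [Pi.smul_apply, smul_eq_mul]
    ring
  have hβ1 : Real.sqrt (hH.eigenvalues j) * (n⁻¹ * d)^2 = 1 := by
    have hexp : ∑ i, ∑ k, X i k
        = (Real.sqrt (hH.eigenvalues j) * (n⁻¹ * d)^2) * ((∑ i, c i) * (∑ k, c k)) := by
      simp only [hXab2]
      rw [Finset.sum_mul_sum]
      simp only [Finset.mul_sum]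
      try exact Finset.sum_congr rfl fun i _ => Finset.sum_congr rfl fun k _ => by ring
    rw [hexp, hcsum] at hXsum
    have hnn0 : (n * n : ℝ) ≠ 0 := by positivity
    refine mul_right_cancel₀ hnn0 (hXsum.trans ?_)
    ring
  ext a b
  rw [hXab2 a b, hβ1, one_mul, vecMulVec_apply]

lemma frob_vecMulVec (c : V → ℝ) (M : Matrix V V ℝ) :
    ∑ i, ∑ j, M i j * (vecMulVec c c) i j = c ⬝ᵥ (M *ᵥ c) := by
  simp only [vecMulVec_apply, dotProduct, mulVec]
  refine Finset.sum_congr rfl fun i _ => ?_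
  rw [Finset.mul_sum]
  exact Finset.sum_congr rfl fun j _ => by ring

lemma sum_entries_vecMulVec_s10 (a b : V → ℝ) :
    ∑ i, ∑ j, (vecMulVec a b) i j = (∑ i, a i) * (∑ j, b j) := by
  rw [Finset.sum_mul_sum]
  exact Finset.sum_congr rfl fun i _ => Finset.sum_congr rfl fun j _ => rfl

lemma entry_mu (μ : ℝ) (Λ : Matrix V V ℝ) (i j : V) :
    (μ • (Matrix.of (fun _ _ => (1 : ℝ)) : Matrix V V ℝ) + Λ) i j = μ + Λ i j := by
  show μ * 1 + Λ i j = μ + Λ i j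
  rw [mul_one]

set_option maxHeartbeats 1000000 in
/-- KKT conditions for the clique relaxation. Under the stated multiplier
conditions, `X* = v̄ v̄ᵀ` is optimal for (C) and `V*` is a maximum clique of `G`; if moreover
`‖W‖ < 1` and `μ > 0`, then `X*` is the unique optimizer of (C) and `V*` is the unique
maximum clique of `G`. -/
theorem clique_relaxation_optimality
    (V : Type) [Fintype V] [DecidableEq V] (N : ℕ) (hN : Fintype.card V = N)
    (G : SimpleGraph V) (Vstar : Finset V) (n : ℕ) (hn : 1 ≤ n)
    (hcard : Vstar.card = n)
    (hclique : G.IsClique (Vstar : Set V))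
    (W Λ : Matrix V V ℝ) (μ : ℝ) (hμ : 0 ≤ μ)
    (hWv : W *ᵥ charVec Vstar = 0)
    (hvW : charVec Vstar ᵥ* W = 0)
    (hWnorm : matSpectralNorm W ≤ 1)
    (hΛ : ∀ i j, (i = j ∨ G.Adj i j) → Λ i j = 0)
    (heq : ((n : ℝ))⁻¹ • vecMulVec (charVec Vstar) (charVec Vstar) + W
         = μ • Matrix.of (fun _ _ => (1 : ℝ)) + Λ) :
    ((∀ X : Matrix V V ℝ, FeasC G n X →
        nuclearNorm X ≥ nuclearNorm (vecMulVec (charVec Vstar) (charVec Vstar))) ∧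
     (∀ S : Finset V, G.IsClique (S : Set V) → S.card ≤ n)) ∧
    (matSpectralNorm W < 1 → 0 < μ →
      (∀ X : Matrix V V ℝ, FeasC G n X →
          X ≠ vecMulVec (charVec Vstar) (charVec Vstar) →
          nuclearNorm X > nuclearNorm (vecMulVec (charVec Vstar) (charVec Vstar))) ∧
      (∀ S : Finset V, G.IsClique (S : Set V) → n ≤ S.card → S = Vstar)) := by
  set c : V → ℝ := charVec Vstar with hc
  have hnR : 0 < (n:ℝ) := by exact_mod_cast hn
  have hcc : c ⬝ᵥ c = (n:ℝ) := by rw [hc, charVec_dot, hcard]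
  have hcs : ∑ i, c i = (n:ℝ) := by rw [hc, charVec_sum, hcard]
  -- nuclear norm of the candidate
  have hnuc : nuclearNorm (vecMulVec c c) = (n:ℝ) := by
    have h := nuclear_smul_vecMulVec (1:ℝ) zero_le_one c
    rw [one_smul, one_mul, hcc] at h
    exact h
  -- Lambda kills feasible entries
  have hLX : ∀ X : Matrix V V ℝ, (∀ i j, i ≠ j → ¬G.Adj i j → X i j = 0) →
      ∀ i j, Λ i j * X i j = 0 := by
    intro X hX i j
    by_cases hij : i = j
    · rw [hΛ i j (Or.inl hij), zero_mul]
    · by_cases hadj : G.Adj i j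
      · rw [hΛ i j (Or.inr hadj), zero_mul]
      · rw [hX i j hij hadj, mul_zero]
  -- the dual pairing is μ times the sum of entries
  have hpair : ∀ X : Matrix V V ℝ, (∀ i j, i ≠ j → ¬G.Adj i j → X i j = 0) →
      ∑ i, ∑ j, (((n : ℝ))⁻¹ • vecMulVec c c + W) i j * X i j = μ * ∑ i, ∑ j, X i j := by
    intro X hX
    rw [heq]
    have hterm2 : ∀ i j, ((μ • (Matrix.of (fun _ _ => (1:ℝ)) : Matrix V V ℝ) + Λ) i j) * X i j
        = μ * X i j :=
      fun i j => by rw [entry_mu, add_mul, hLX X hX i j, add_zero]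
    simp only [hterm2]
    rw [Finset.mul_sum]
    exact Finset.sum_congr rfl fun i _ => (Finset.mul_sum _ _ _).symm
  -- value of mu
  have hYc : (((n : ℝ))⁻¹ • vecMulVec c c + W) *ᵥ c = c := by
    rw [Matrix.add_mulVec, Matrix.smul_mulVec, vecMulVec_mulVec', hWv, hcc,
      smul_smul, add_zero, inv_mul_cancel₀ (ne_of_gt hnR), one_smul]
  have hcLc : ∀ i j, Λ i j * (vecMulVec c c) i j = 0 := by
    intro i j
    rw [vecMulVec_apply]
    by_cases hi : i ∈ Vstar
    · by_cases hj : j ∈ Vstar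
      · by_cases hij : i = j
        · rw [hΛ i j (Or.inl hij), zero_mul]
        · rw [hΛ i j (Or.inr (hclique hi hj hij)), zero_mul]
      · rw [hc]; simp [charVec, hj]
    · rw [hc]; simp [charVec, hi]
  have hμn : μ * (n:ℝ)^2 = (n:ℝ) := by
    have h1 : ∑ i, ∑ j, (((n : ℝ))⁻¹ • vecMulVec c c + W) i j * (vecMulVec c c) i j = (n:ℝ) := by
      rw [frob_vecMulVec, hYc, hcc]
    have h2 : ∑ i, ∑ j, (((n : ℝ))⁻¹ • vecMulVec c c + W) i j * (vecMulVec c c) i j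
        = μ * (n:ℝ)^2 := by
      rw [heq]
      have hterm2 : ∀ i j, ((μ • (Matrix.of (fun _ _ => (1:ℝ)) : Matrix V V ℝ) + Λ) i j)
            * (vecMulVec c c) i j
          = μ * (vecMulVec c c) i j :=
        fun i j => by rw [entry_mu, add_mul, hcLc i j, add_zero]
      simp only [hterm2]
      have hms : ∑ i, ∑ j, μ * (vecMulVec c c) i j = μ * ∑ i, ∑ j, (vecMulVec c c) i j := by
        rw [Finset.mul_sum]
        exact Finset.sum_congr rfl fun i _ => (Finset.mul_sum _ _ _).symm
      rw [hms, sum_entries_vecMulVec_s10, hcs]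
      ring
    rw [← h2, h1]
  -- main lower bound for feasible X
  have hlb : ∀ X : Matrix V V ℝ, FeasC G n X → (n:ℝ) ≤ nuclearNorm X := by
    intro X hX
    have h1 := nuclear_lb hnR c hcc W hWv hvW hWnorm X
    have h2 := hpair X hX.2
    have h3 : μ * (n:ℝ)^2 ≤ μ * ∑ i, ∑ j, X i j := mul_le_mul_of_nonneg_left hX.1 hμ
    rw [hμn] at h3
    rw [h2] at h1
    linarith
  -- feasibility and nuclear norm of scaled clique indicators
  have hfeasS : ∀ S : Finset V, G.IsClique (S : Set V) → ∀ t : ℝ,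
      (∀ i j, i ≠ j → ¬G.Adj i j → (t • vecMulVec (charVec S) (charVec S)) i j = 0) := by
    intro S hS t i j hij hadj
    simp only [Matrix.smul_apply, vecMulVec_apply, smul_eq_mul]
    by_cases hi : i ∈ S
    · by_cases hj : j ∈ S
      · exact absurd (hS hi hj hij) hadj
      · simp [charVec, hj]
    · simp [charVec, hi]
  have hsumS : ∀ S : Finset V, ∀ t : ℝ,
      ∑ i, ∑ j, (t • vecMulVec (charVec S) (charVec S)) i j = t * (S.card:ℝ)^2 := by
    intro S t
    have : ∀ i j, (t • vecMulVec (charVec S) (charVec S)) i j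
        = t * ((vecMulVec (charVec S) (charVec S)) i j) := fun i j => rfl
    simp only [this]
    rw [show ∑ i, ∑ j, t * ((vecMulVec (charVec S) (charVec S)) i j)
      = t * ∑ i, ∑ j, (vecMulVec (charVec S) (charVec S)) i j by
        rw [Finset.mul_sum]; exact Finset.sum_congr rfl fun i _ => (Finset.mul_sum _ _ _).symm,
      sum_entries_vecMulVec_s10, charVec_sum]
    ring
  have hnucS : ∀ S : Finset V, ∀ t : ℝ, 0 ≤ t →
      nuclearNorm (t • vecMulVec (charVec S) (charVec S)) = t * (S.card:ℝ) := by
    intro S t ht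
    rw [nuclear_smul_vecMulVec t ht (charVec S), charVec_dot]
  -- Part 1b : clique bound
  have hcliquebound : ∀ S : Finset V, G.IsClique (S : Set V) → S.card ≤ n := by
    intro S hS
    rcases Nat.eq_zero_or_pos S.card with hm | hm
    · omega
    have hmR : 0 < (S.card : ℝ) := by exact_mod_cast hm
    set t : ℝ := ((n:ℝ)/(S.card:ℝ))^2 with ht
    have ht0 : 0 ≤ t := sq_nonneg _
    have hfeas : FeasC G n (t • vecMulVec (charVec S) (charVec S)) := by
      constructor
      · rw [hsumS S t, ht]
        rw [div_pow, div_mul_cancel₀]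
        positivity
      · exact hfeasS S hS t
    have := hlb _ hfeas
    rw [hnucS S t ht0] at this
    have hcmp : (n:ℝ) * (S.card:ℝ) ≤ (n:ℝ)^2 := by
      rw [ht] at this
      rw [div_pow] at this
      have h := mul_le_mul_of_nonneg_right this (le_of_lt hmR)
      calc (n:ℝ) * (S.card:ℝ) ≤ ((n:ℝ)^2/(S.card:ℝ)^2 * (S.card:ℝ)) * (S.card:ℝ) := by
            nlinarith
        _ = (n:ℝ)^2 := by field_simp
    have : (S.card : ℝ) ≤ (n:ℝ) := by nlinarith
    exact_mod_cast this
  refine ⟨⟨fun X hX => by rw [hnuc]; exact hlb X hX, hcliquebound⟩, ?_⟩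
  intro hWlt hμpos
  have hμval : μ = ((n:ℝ))⁻¹ := by
    field_simp at hμn ⊢
    nlinarith [hμn]
  -- strict part for matrices
  have hstrict : ∀ X : Matrix V V ℝ, FeasC G n X →
      X ≠ vecMulVec c c → nuclearNorm X > (n:ℝ) := by
    intro X hX hne
    by_contra hle
    push_neg at hle
    have h1 := nuclear_lb hnR c hcc W hWv hvW hWnorm X
    have h2 := hpair X hX.2
    have h3 : μ * (n:ℝ)^2 ≤ μ * ∑ i, ∑ j, X i j := mul_le_mul_of_nonneg_left hX.1 hμ
    rw [hμn] at h3
    rw [h2] at h1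
    -- all inequalities are equalities
    have hnucX : nuclearNorm X = (n:ℝ) := le_antisymm hle (by linarith)
    have hpairn : μ * ∑ i, ∑ j, X i j = (n:ℝ) := le_antisymm (by linarith [h1, hnucX]) h3
    have hXsum : ∑ i, ∑ j, X i j = (n:ℝ)^2 := by
      rw [hμval] at hpairn
      field_simp at hpairn
      linarith [hpairn]
    have hsum' : ∑ i, ∑ j, (((n : ℝ))⁻¹ • vecMulVec c c + W) i j * X i j = nuclearNorm X := by
      rw [h2, hpairn, hnucX]
    exact hne (equality_case hnR c hcc hcs W hWv hvW hWlt X hsum' hXsum)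
  constructor
  · intro X hX hne
    rw [hnuc]
    exact hstrict X hX hne
  · intro S hS hcardS
    have hSn : S.card = n := le_antisymm (hcliquebound S hS) hcardS
    have hfeas : FeasC G n ((1:ℝ) • vecMulVec (charVec S) (charVec S)) := by
      constructor
      · rw [hsumS S 1, hSn, one_mul]
      · exact hfeasS S hS 1
    rw [one_smul] at hfeas
    have heqS : vecMulVec (charVec S) (charVec S) = vecMulVec c c := by
      by_contra hne
      have := hstrict _ hfeas hne
      have hnucS' : nuclearNorm (vecMulVec (charVec S) (charVec S)) = (n:ℝ) := by
        have h := hnucS S 1 zero_le_one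
        rw [one_smul, one_mul, hSn] at h
        exact h
      rw [hnucS'] at this
      exact lt_irrefl _ this
    ext i
    have hii := congrFun (congrFun heqS i) i
    rw [vecMulVec_apply, vecMulVec_apply, hc] at hii
    simp only [charVec] at hii
    constructor
    · intro hi
      by_contra hiV
      rw [if_pos hi, if_neg hiV] at hii
      norm_num at hii
    · intro hi
      by_contra hiS
      rw [if_neg hiS, if_pos hi] at hii
      norm_num at hii
end

section
/- Let G = ((U,V), E) be a bipartite graph with |U| = M, |V| = N, and let m, n be positive integers. Then there exists a rank-one matrix X ∈ R^{U×V} with all entries in [0,1], satisfying X_{ij} = 0 for all (i,j) ∈ (U×V) − E and Σ_{i∈U} Σ_{j∈V} X_{ij} ≥ mn, if and only if G contains a biclique with at least mn edges, i.e., there exist I ⊆ U, J ⊆ V with I × J ⊆ E and |I|·|J| ≥ mn. -/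
open Matrix

/-- for a bipartite graph `G = ((U,V),E)` with `|U| = M`, `|V| = N`, there is
a rank-one matrix `X ∈ [0,1]^{U×V}` vanishing outside `E` with `∑_{i,j} X_{ij} ≥ mn` iff
`G` contains a biclique with at least `mn` edges. -/
theorem rank_one_iff_biclique
    (M N m n : ℕ) (hm : 0 < m) (hn : 0 < n)
    (E : Set (Fin M × Fin N)) :
    (∃ X : Matrix (Fin M) (Fin N) ℝ,
        X.rank = 1 ∧
        (∀ i j, X i j ∈ Set.Icc (0 : ℝ) 1) ∧
        (∀ i j, (i, j) ∉ E → X i j = 0) ∧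
        (m : ℝ) * n ≤ ∑ i, ∑ j, X i j) ↔
    (∃ (I : Finset (Fin M)) (J : Finset (Fin N)),
        (∀ i ∈ I, ∀ j ∈ J, (i, j) ∈ E) ∧ m * n ≤ I.card * J.card) := by
  classical
  constructor
  · rintro ⟨X, hrank, hIcc, hE, hsum⟩
    rw [Matrix.rank] at hrank
    obtain ⟨u, hu0, hu⟩ := (finrank_eq_one_iff').mp hrank
    set I : Finset (Fin M) := Finset.univ.filter (fun i => ∃ j, X i j ≠ 0) with hI
    set J : Finset (Fin N) := Finset.univ.filter (fun j => ∃ i, X i j ≠ 0) with hJ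
    have hcol : ∀ j : Fin N, ∃ c : ℝ, ∀ i, X i j = c * (u : Fin M → ℝ) i := by
      intro j
      have hmem : X.mulVec (Pi.single j 1) ∈ LinearMap.range X.mulVecLin :=
        ⟨Pi.single j 1, rfl⟩
      obtain ⟨c, hc⟩ := hu ⟨_, hmem⟩
      refine ⟨c, fun i => ?_⟩
      have h2 := congrArg (fun w : LinearMap.range X.mulVecLin => (w : Fin M → ℝ) i) hc
      simpa [Matrix.mulVec_single] using h2.symm
    have key : ∀ i ∈ I, ∀ j ∈ J, X i j ≠ 0 := by
      intro i hi j hj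
      simp only [hI, Finset.mem_filter, Finset.mem_univ, true_and] at hi
      simp only [hJ, Finset.mem_filter, Finset.mem_univ, true_and] at hj
      obtain ⟨j0, hj0⟩ := hi
      obtain ⟨i0, hi0⟩ := hj
      obtain ⟨c, hc⟩ := hcol j
      obtain ⟨c0, hc0⟩ := hcol j0
      have hui : (u : Fin M → ℝ) i ≠ 0 := fun h => hj0 (by rw [hc0 i, h, mul_zero])
      have hcne : c ≠ 0 := fun h => hi0 (by rw [hc i0, h, zero_mul])
      rw [hc i]; exact mul_ne_zero hcne hui
    refine ⟨I, J, ?_, ?_⟩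
    · intro i hi j hj
      by_contra hne
      exact key i hi j hj (hE i j hne)
    · have e1 : ∑ i, ∑ j, X i j = ∑ i ∈ I, ∑ j, X i j :=
        (Finset.sum_subset I.subset_univ (fun i _ hiI => Finset.sum_eq_zero fun j _ => by
          simp only [hI, Finset.mem_filter, Finset.mem_univ, true_and, not_exists,
            not_not] at hiI
          exact hiI j)).symm
      have e2 : ∀ i, ∑ j, X i j = ∑ j ∈ J, X i j := fun i =>
        (Finset.sum_subset J.subset_univ (fun j _ hjJ => by
          simp only [hJ, Finset.mem_filter, Finset.mem_univ, true_and, not_exists,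
            not_not] at hjJ
          exact hjJ i)).symm
      have hle : (m : ℝ) * n ≤ (I.card : ℝ) * J.card := by
        calc (m : ℝ) * n ≤ ∑ i, ∑ j, X i j := hsum
          _ = ∑ i ∈ I, ∑ j ∈ J, X i j := by
              rw [e1]; exact Finset.sum_congr rfl fun i _ => e2 i
          _ ≤ ∑ _i ∈ I, ∑ _j ∈ J, (1 : ℝ) :=
              Finset.sum_le_sum fun i _ => Finset.sum_le_sum fun j _ => (hIcc i j).2
          _ = (I.card : ℝ) * J.card := by simp [mul_comm]
      exact_mod_cast hle
  · rintro ⟨I, J, hIJ, hcard⟩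
    have hpos : 0 < I.card * J.card := lt_of_lt_of_le (Nat.mul_pos hm hn) hcard
    have hIc : 0 < I.card := Nat.pos_of_ne_zero fun h => by simp [h] at hpos
    have hJc : 0 < J.card := Nat.pos_of_ne_zero fun h => by simp [h] at hpos
    obtain ⟨i0, hi0⟩ := Finset.card_pos.mp hIc
    obtain ⟨j0, hj0⟩ := Finset.card_pos.mp hJc
    set a : Fin M → ℝ := fun i => if i ∈ I then 1 else 0 with ha
    set b : Fin N → ℝ := fun j => if j ∈ J then 1 else 0 with hb
    have ha0 : a ≠ 0 := by
      intro h
      have := congrFun h i0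
      simp [ha, hi0] at this
    refine ⟨Matrix.of (fun i j => a i * b j), ?_, ?_, ?_, ?_⟩
    · have hrange : LinearMap.range (Matrix.of fun i j => a i * b j).mulVecLin
          = Submodule.span ℝ {a} := by
        apply le_antisymm
        · rintro w ⟨x, rfl⟩
          have hx : (Matrix.of fun i j => a i * b j).mulVecLin x = (∑ j, b j * x j) • a := by
            ext i
            simp [Matrix.mulVecLin_apply, Matrix.mulVec, dotProduct, Finset.mul_sum,
              mul_assoc, mul_comm, mul_left_comm]
          rw [hx]
          exact Submodule.smul_mem _ _ (Submodule.mem_span_singleton_self a)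
        · rw [Submodule.span_le, Set.singleton_subset_iff]
          refine ⟨Pi.single j0 1, ?_⟩
          ext i
          simp [Matrix.mulVecLin_apply, Matrix.mulVec_single, hb, hj0]
      rw [Matrix.rank, hrange, finrank_span_singleton ha0]
    · intro i j
      simp only [Matrix.of_apply, ha, hb]
      constructor <;> split_ifs <;> norm_num
    · intro i j hij
      simp only [Matrix.of_apply, ha, hb]
      by_cases hi : i ∈ I
      · by_cases hj : j ∈ J
        · exact absurd (hIJ i hi j hj) hij
        · simp [hj]
      · simp [hi]
    · have hsa : ∑ i, a i = (I.card : ℝ) := by simp [ha]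
      have hsb : ∑ j, b j = (J.card : ℝ) := by simp [hb]
      have : ∑ i, ∑ j, (Matrix.of fun i j => a i * b j) i j = (I.card : ℝ) * J.card := by
        simp only [Matrix.of_apply, ← Finset.mul_sum, ← Finset.sum_mul, hsa, hsb]
      rw [this]
      exact_mod_cast hcard
end
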